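/- arXiv:math/0302325 — 2 statements merged into one kernel-verified Lean document; each statement's English description precedes it below -/
import Mathlib

section
/- Let k be a field with characteristic ≠ 2, and consider the group bialgebra kZ₂ = k⟨t | t² = 1⟩ with Δ(t) = t ⊗ t, ε(t) = 1, viewed as a left bialgebroid over the base k. Define S : kZ₂ → kZ₂ by S(t) = −t (and S(1) = 1, extended k-linearly). Then (kZ₂, S) is a Hopf algebroid in the sense of Böhm–Szlachányi, but S does not satisfy Lu's antipode axiom: there is no section ξ of the canonical projection kZ₂ ⊗_k kZ₂ → kZ₂ ⊗_L kZ₂ such that multiplication ∘ (id ⊗ S) ∘ ξ ∘ γ_L equals s_L ∘ π_L (indeed t₍₁₎ S(t₍₂₎) = −1 ≠ 1 = η(ε(t))). -/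
open scoped TensorProduct

namespace HopfAlgd

variable (A : Type*) [Ring A]

/-- `x ⊗ (y ⊗ z) ↦ (y * x) ⊗ z`. -/
noncomputable def m13 : A ⊗[ℤ] (A ⊗[ℤ] A) →ₗ[ℤ] A ⊗[ℤ] A :=
  (LinearMap.rTensor A (LinearMap.mul' ℤ A)) ∘ₗ
  (TensorProduct.assoc ℤ A A A).symm.toLinearMap ∘ₗ
  (LinearMap.lTensor A (TensorProduct.comm ℤ A A).toLinearMap) ∘ₗ
  (TensorProduct.assoc ℤ A A A).toLinearMap ∘ₗ
  (TensorProduct.comm ℤ A (A ⊗[ℤ] A)).toLinearMap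

/-- `x ⊗ (y ⊗ z) ↦ y ⊗ (z * x)`. -/
noncomputable def m23 : A ⊗[ℤ] (A ⊗[ℤ] A) →ₗ[ℤ] A ⊗[ℤ] A :=
  (LinearMap.lTensor A (LinearMap.mul' ℤ A)) ∘ₗ
  (TensorProduct.assoc ℤ A A A).toLinearMap ∘ₗ
  (TensorProduct.comm ℤ A (A ⊗[ℤ] A)).toLinearMap

/-- `(x ⊗ y) ⊗ z ↦ (x * z) ⊗ y`. -/
noncomputable def m13' : (A ⊗[ℤ] A) ⊗[ℤ] A →ₗ[ℤ] A ⊗[ℤ] A :=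
  (LinearMap.rTensor A (LinearMap.mul' ℤ A)) ∘ₗ
  (TensorProduct.assoc ℤ A A A).symm.toLinearMap ∘ₗ
  (LinearMap.lTensor A (TensorProduct.comm ℤ A A).toLinearMap) ∘ₗ
  (TensorProduct.assoc ℤ A A A).toLinearMap

/-- `(x ⊗ y) ⊗ z ↦ x ⊗ (y * z)`. -/
noncomputable def m23' : (A ⊗[ℤ] A) ⊗[ℤ] A →ₗ[ℤ] A ⊗[ℤ] A :=
  (LinearMap.lTensor A (LinearMap.mul' ℤ A)) ∘ₗ (TensorProduct.assoc ℤ A A A).toLinearMap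

variable {A}

/-- The subgroup of `A ⊗[ℤ] A` implementing the tensor product over a base ring, where the
relevant right action on the first factor is `f` and left action on the second factor is `g`. -/
def trel {L : Type*} (f g : L → A → A) : Submodule ℤ (A ⊗[ℤ] A) :=
  Submodule.span ℤ {x | ∃ (l : L) (a b : A), x = f l a ⊗ₜ[ℤ] b - a ⊗ₜ[ℤ] g l b}

/-- Analogue of `trel` for threefold tensor products. -/
def trel3 {L R : Type*} (f g : L → A → A) (f' g' : R → A → A) :
    Submodule ℤ (A ⊗[ℤ] (A ⊗[ℤ] A)) :=
  Submodule.span ℤ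
    ({x | ∃ (l : L) (a b c : A),
        x = f l a ⊗ₜ[ℤ] (b ⊗ₜ[ℤ] c) - a ⊗ₜ[ℤ] (g l b ⊗ₜ[ℤ] c)} ∪
     {x | ∃ (r : R) (a b c : A),
        x = a ⊗ₜ[ℤ] (f' r b ⊗ₜ[ℤ] c) - a ⊗ₜ[ℤ] (b ⊗ₜ[ℤ] g' r c)})

variable (A) in
/-- The data of a left bialgebroid: source and target maps, a chosen (Sweedler
representative of the) coproduct, and the counit. -/
structure LeftBialgebroidData (L : Type*) [Ring L] where
  s : L →+* A
  t : L →+ A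
  t_one : t 1 = 1
  t_mul : ∀ l l', t (l * l') = t l' * t l
  st_comm : ∀ l l', s l * t l' = t l' * s l
  Δ : A →+ A ⊗[ℤ] A
  π : A →+ L

variable {L R : Type*} [Ring L] [Ring R]

/-- The subgroup of `A ⊗[ℤ] A` by which one quotients to get `A_L ⊗_L _L A`. -/
def LeftBialgebroidData.rel (B : LeftBialgebroidData A L) : Submodule ℤ (A ⊗[ℤ] A) :=
  trel (fun l a => B.t l * a) (fun l b => B.s l * b)

def LeftBialgebroidData.rel3 (B : LeftBialgebroidData A L) :
    Submodule ℤ (A ⊗[ℤ] (A ⊗[ℤ] A)) :=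
  trel3 (fun l a => B.t l * a) (fun l b => B.s l * b)
        (fun l a => B.t l * a) (fun l b => B.s l * b)

variable (A) in
/-- A left bialgebroid (Takeuchi `×_L`-bialgebra), with the comonoid structure encoded via a
chosen additive lift `Δ` of the coproduct `γ_L`; all equalities in `A ⊗_L A` are expressed
as membership of differences in the relation subgroup `rel`. -/
structure LeftBialgebroid (L : Type*) [Ring L] extends LeftBialgebroidData A L where
  coassoc : ∀ a, (LinearMap.lTensor A Δ.toIntLinearMap) (Δ a)
      - @id (A ⊗[ℤ] (A ⊗[ℤ] A)) ((TensorProduct.assoc ℤ A A A) ((LinearMap.rTensor A Δ.toIntLinearMap) (Δ a)))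
      ∈ toLeftBialgebroidData.rel3
  cros : ∀ a l, (LinearMap.rTensor A (LinearMap.mulRight ℤ (t l))) (Δ a)
      - (LinearMap.lTensor A (LinearMap.mulRight ℤ (s l))) (Δ a) ∈ toLeftBialgebroidData.rel
  Δ_one : Δ 1 - (1 : A) ⊗ₜ[ℤ] (1 : A) ∈ toLeftBialgebroidData.rel
  Δ_mul : ∀ a b, Δ (a * b) - Δ a * Δ b ∈ toLeftBialgebroidData.rel
  counit_s : ∀ a, LinearMap.mul' ℤ A
      ((LinearMap.rTensor A (s.toAddMonoidHom.comp π).toIntLinearMap) (Δ a)) = a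
  counit_t : ∀ a, LinearMap.mul' ℤ A ((TensorProduct.comm ℤ A A)
      ((LinearMap.lTensor A (t.comp π).toIntLinearMap) (Δ a))) = a
  π_one : π 1 = 1
  π_s : ∀ a b, π (a * s (π b)) = π (a * b)
  π_t : ∀ a b, π (a * t (π b)) = π (a * b)
  π_bimod : ∀ l l' a, π (s l * (t l' * a)) = l * π a * l'

def LeftBialgebroid.rel (B : LeftBialgebroid A L) : Submodule ℤ (A ⊗[ℤ] A) :=
  B.toLeftBialgebroidData.rel

variable (A) in
/-- The data of a right bialgebroid. -/
structure RightBialgebroidData (R : Type*) [Ring R] where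
  s : R →+* A
  t : R →+ A
  t_one : t 1 = 1
  t_mul : ∀ r r', t (r * r') = t r' * t r
  st_comm : ∀ r r', s r * t r' = t r' * s r
  Δ : A →+ A ⊗[ℤ] A
  π : A →+ R

/-- The subgroup of `A ⊗[ℤ] A` by which one quotients to get `A^R ⊗_R ^R A`. -/
def RightBialgebroidData.rel (B : RightBialgebroidData A R) : Submodule ℤ (A ⊗[ℤ] A) :=
  trel (fun r a => a * B.s r) (fun r b => b * B.t r)

def RightBialgebroidData.rel3 (B : RightBialgebroidData A R) :
    Submodule ℤ (A ⊗[ℤ] (A ⊗[ℤ] A)) :=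
  trel3 (fun r a => a * B.s r) (fun r b => b * B.t r)
        (fun r a => a * B.s r) (fun r b => b * B.t r)

variable (A) in
/-- A right bialgebroid, with chosen additive lift `Δ` of the coproduct `γ_R`. -/
structure RightBialgebroid (R : Type*) [Ring R] extends RightBialgebroidData A R where
  coassoc : ∀ a, (LinearMap.lTensor A Δ.toIntLinearMap) (Δ a)
      - @id (A ⊗[ℤ] (A ⊗[ℤ] A)) ((TensorProduct.assoc ℤ A A A) ((LinearMap.rTensor A Δ.toIntLinearMap) (Δ a)))
      ∈ toRightBialgebroidData.rel3
  cros : ∀ a r, (LinearMap.rTensor A (LinearMap.mulLeft ℤ (s r))) (Δ a)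
      - (LinearMap.lTensor A (LinearMap.mulLeft ℤ (t r))) (Δ a) ∈ toRightBialgebroidData.rel
  Δ_one : Δ 1 - (1 : A) ⊗ₜ[ℤ] (1 : A) ∈ toRightBialgebroidData.rel
  Δ_mul : ∀ a b, Δ (a * b) - Δ a * Δ b ∈ toRightBialgebroidData.rel
  counit_s : ∀ a, LinearMap.mul' ℤ A
      ((LinearMap.lTensor A (s.toAddMonoidHom.comp π).toIntLinearMap) (Δ a)) = a
  counit_t : ∀ a, LinearMap.mul' ℤ A ((TensorProduct.comm ℤ A A)
      ((LinearMap.rTensor A (t.comp π).toIntLinearMap) (Δ a))) = a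
  π_one : π 1 = 1
  π_s : ∀ a b, π (s (π a) * b) = π (a * b)
  π_t : ∀ a b, π (t (π a) * b) = π (a * b)
  π_bimod : ∀ r r' a, π (a * s r' * t r) = r * π a * r'

def RightBialgebroid.rel (B : RightBialgebroid A R) : Submodule ℤ (A ⊗[ℤ] A) :=
  B.toRightBialgebroidData.rel

/-- The expression `a ↦ ∑ (f a₍₁₎)₍₁'₎ a₍₂₎ ⊗ (f a₍₁₎)₍₂'₎` (applied to `Δ a`). -/
noncomputable def axsExpr (Δ : A →+ A ⊗[ℤ] A) (f : A →+ A) :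
    A ⊗[ℤ] A →ₗ[ℤ] A ⊗[ℤ] A :=
  m13' A ∘ₗ LinearMap.rTensor A (Δ.toIntLinearMap ∘ₗ f.toIntLinearMap)

/-- The expression `a ↦ ∑ (f a₍₂₎)₍₁'₎ ⊗ (f a₍₂₎)₍₂'₎ a₍₁₎` (applied to `Δ a`). -/
noncomputable def axsiExpr (Δ : A →+ A ⊗[ℤ] A) (f : A →+ A) :
    A ⊗[ℤ] A →ₗ[ℤ] A ⊗[ℤ] A :=
  m23 A ∘ₗ LinearMap.lTensor A (Δ.toIntLinearMap ∘ₗ f.toIntLinearMap)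

/-- Definition 4.1 of Böhm–Szlachányi: a Hopf algebroid is a left bialgebroid together with a
ring anti-automorphism `S` such that `S ∘ t_L = s_L` and the two antipode axioms hold. -/
structure IsHopfAlgebroid (B : LeftBialgebroid A L) (S : A ≃+ A) : Prop where
  anti_mul : ∀ a b, S (a * b) = S b * S a
  one_map : S 1 = 1
  S_t : ∀ l, S (B.t l) = B.s l
  axs : ∀ a, axsExpr B.Δ S.toAddMonoidHom (B.Δ a) - (1 : A) ⊗ₜ[ℤ] S a ∈ B.rel
  axsi : ∀ a, axsiExpr B.Δ S.symm.toAddMonoidHom (B.Δ a) - S.symm a ⊗ₜ[ℤ] (1 : A) ∈ B.rel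

/-- The relation subgroup for `A_L ⊗_L (_L A^R) ⊗_R (^R A)`. -/
def mixedRel₁ (Bl : LeftBialgebroidData A L) (Br : RightBialgebroidData A R) :
    Submodule ℤ (A ⊗[ℤ] (A ⊗[ℤ] A)) :=
  trel3 (fun l a => Bl.t l * a) (fun l b => Bl.s l * b)
        (fun r b => b * Br.s r) (fun r c => c * Br.t r)

/-- The relation subgroup for `A^R ⊗_R (^R A_L) ⊗_L (_L A)`. -/
def mixedRel₂ (Bl : LeftBialgebroidData A L) (Br : RightBialgebroidData A R) :
    Submodule ℤ (A ⊗[ℤ] (A ⊗[ℤ] A)) :=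
  trel3 (fun r a => a * Br.s r) (fun r b => b * Br.t r)
        (fun l b => Bl.t l * b) (fun l c => Bl.s l * c)

variable (A L R) in
/-- A symmetrized Hopf algebroid in the sense of Proposition 4.2 (iii) of Böhm–Szlachányi:
compatible left and right bialgebroid structures over anti-isomorphic base rings, connected
by an additive bijection `S` satisfying the twisted bimodule and antipode conditions. -/
structure SymHopfAlgebroid : Type _ where
  left : LeftBialgebroid A L
  right : RightBialgebroid A R
  S : A ≃+ A
  base_op : Nonempty (L ≃+* Rᵐᵒᵖ)
  st_img : ∀ l, ∃ r, left.s l = right.t r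
  ts_img : ∀ r, ∃ l, right.t r = left.s l
  ts_img' : ∀ l, ∃ r, left.t l = right.s r
  st_img' : ∀ r, ∃ l, right.s r = left.t l
  mixed₁ : ∀ a, @id (A ⊗[ℤ] (A ⊗[ℤ] A)) ((TensorProduct.assoc ℤ A A A)
        ((LinearMap.rTensor A left.Δ.toIntLinearMap) (right.Δ a)))
      - (LinearMap.lTensor A right.Δ.toIntLinearMap) (left.Δ a)
      ∈ mixedRel₁ left.toLeftBialgebroidData right.toRightBialgebroidData
  mixed₂ : ∀ a, @id (A ⊗[ℤ] (A ⊗[ℤ] A)) ((TensorProduct.assoc ℤ A A A)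
        ((LinearMap.rTensor A right.Δ.toIntLinearMap) (left.Δ a)))
      - (LinearMap.lTensor A left.Δ.toIntLinearMap) (right.Δ a)
      ∈ mixedRel₂ left.toLeftBialgebroidData right.toRightBialgebroidData
  S_twist_L : ∀ l l' a, S (left.t l * a * left.t l') = left.s l' * S a * left.s l
  S_twist_R : ∀ r r' a, S (right.t r' * a * right.t r) = right.s r * S a * right.s r'
  antipode_L : ∀ a, LinearMap.mul' ℤ A
      ((LinearMap.rTensor A S.toAddMonoidHom.toIntLinearMap) (left.Δ a))
      = right.s (right.π a)
  antipode_R : ∀ a, LinearMap.mul' ℤ A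
      ((LinearMap.lTensor A S.toAddMonoidHom.toIntLinearMap) (right.Δ a))
      = left.s (left.π a)

namespace SymHopfAlgebroid

variable (H : SymHopfAlgebroid A L R)

/-- Left integrals: invariants of the left regular module. -/
def IsLeftIntegral (ℓ : A) : Prop := ∀ a, a * ℓ = H.left.s (H.left.π a) * ℓ

/-- Right integrals: invariants of the right regular module. -/
def IsRightIntegral (x : A) : Prop := ∀ a, x * a = x * H.right.s (H.right.π a)

/-- Membership in the dual `A^* = Hom(A^R, R^R)`. -/
def InAstarR (φ : A →+ R) : Prop := ∀ a r, φ (a * H.right.s r) = φ a * r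

/-- Membership in the dual `^*A = Hom(^R A, ^R R)`. -/
def InstarAR (φ : A →+ R) : Prop := ∀ a r, φ (a * H.right.t r) = r * φ a

/-- Membership in the dual `A_* = Hom(A_L, L_L)`. -/
def InAstarL (φ : A →+ L) : Prop := ∀ a l, φ (H.left.t l * a) = φ a * l

/-- Membership in the dual `_*A = Hom(_L A, _L L)`. -/
def InstarAL (φ : A →+ L) : Prop := ∀ a l, φ (H.left.s l * a) = l * φ a

/-- `φ ⇀ a = a⁽²⁾ t_R (φ a⁽¹⁾)`. -/
noncomputable def rharp (φ : A →+ R) (a : A) : A :=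
  LinearMap.mul' ℤ A ((TensorProduct.comm ℤ A A)
    ((LinearMap.rTensor A (H.right.t.comp φ).toIntLinearMap) (H.right.Δ a)))

/-- `φ ⇁ a = a⁽¹⁾ s_R (φ a⁽²⁾)`. -/
noncomputable def lharp (φ : A →+ R) (a : A) : A :=
  LinearMap.mul' ℤ A
    ((LinearMap.lTensor A (H.right.s.toAddMonoidHom.comp φ).toIntLinearMap) (H.right.Δ a))

/-- `a ↼ φ = s_L (φ a₍₁₎) a₍₂₎`. -/
noncomputable def rharpL (φ : A →+ L) (a : A) : A :=
  LinearMap.mul' ℤ A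
    ((LinearMap.rTensor A (H.left.s.toAddMonoidHom.comp φ).toIntLinearMap) (H.left.Δ a))

/-- `a ↽ φ = t_L (φ a₍₂₎) a₍₁₎`. -/
noncomputable def lharpL (φ : A →+ L) (a : A) : A :=
  LinearMap.mul' ℤ A ((TensorProduct.comm ℤ A A)
    ((LinearMap.lTensor A (H.left.t.comp φ).toIntLinearMap) (H.left.Δ a)))

/-- Non-degeneracy of a left integral: the maps `ℓ_R : A^* → A` and `_Rℓ : ^*A → A`
are bijective. -/
def IsNonDegLeftIntegral (ℓ : A) : Prop :=
  H.IsLeftIntegral ℓ ∧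
  Function.Bijective (fun φ : {φ : A →+ R // H.InAstarR φ} => H.rharp φ.1 ℓ) ∧
  Function.Bijective (fun φ : {φ : A →+ R // H.InstarAR φ} => H.lharp φ.1 ℓ)

end SymHopfAlgebroid

end HopfAlgd

/-- The group algebra `kZ₂`, modelled as `k[X]/(X² - 1)`. -/
noncomputable abbrev kZtwo (k : Type*) [Field k] : Type _ :=
  AdjoinRoot ((Polynomial.X) ^ 2 - 1 : Polynomial k)


section Aux
open Polynomial
variable {k : Type*} [Field k]

namespace Scratch
noncomputable def tt : kZtwo k := AdjoinRoot.root _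

lemma root_sq : (tt : kZtwo k) ^ 2 = 1 := by
  have := AdjoinRoot.eval₂_root ((X : k[X]) ^ 2 - 1)
  simpa [tt, AdjoinRoot.algebraMap_eq, sub_eq_zero] using this

noncomputable def εa : kZtwo k →ₐ[k] k :=
  AdjoinRoot.liftAlgHom _ (Algebra.ofId k _) 1 (by simp)

noncomputable def εb : kZtwo k →ₐ[k] k :=
  AdjoinRoot.liftAlgHom _ (Algebra.ofId k _) (-1) (by simp)

noncomputable def σ : kZtwo k →ₐ[k] kZtwo k :=
  AdjoinRoot.liftAlgHom _ (Algebra.ofId k _) (-tt) (by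
    have h := root_sq (k := k)
    simp [neg_pow, h, sub_eq_zero])

lemma σ_root : σ (tt : kZtwo k) = -tt := AdjoinRoot.liftAlgHom_root _ _ _ _
lemma σσ : ∀ a : kZtwo k, σ (σ a) = a := by
  have h : (σ.comp σ : kZtwo k →ₐ[k] kZtwo k) = AlgHom.id k _ := by
    apply AdjoinRoot.algHom_ext
    simp [← tt.eq_def, σ_root]
  intro a; exact DFunLike.congr_fun h a
lemma εa_root : εa (tt : kZtwo k) = 1 := AdjoinRoot.liftAlgHom_root _ _ _ _
lemma εb_root : εb (tt : kZtwo k) = -1 := AdjoinRoot.liftAlgHom_root _ _ _ _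


noncomputable def κ : k →+* kZtwo k := algebraMap k _

lemma decomp (a : kZtwo k) : ∃ x y : k, a = κ x + κ y * tt := by
  induction a using AdjoinRoot.induction_on with
  | ih p =>
    induction p using Polynomial.induction_on' with
    | add p q hp hq =>
      obtain ⟨x, y, h1⟩ := hp
      obtain ⟨x', y', h2⟩ := hq
      exact ⟨x + x', y + y', by rw [map_add, h1, h2, map_add, map_add]; ring⟩
    | monomial n x =>
      induction n with
      | zero =>
        refine ⟨x, 0, ?_⟩
        simp [κ, AdjoinRoot.algebraMap_eq, ← Polynomial.C_eq_natCast]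
      | succ m ih =>
        obtain ⟨a, b, hab⟩ := ih
        refine ⟨b, a, ?_⟩
        have : (Polynomial.monomial (m+1)) x = (Polynomial.monomial m) x * X := by
          rw [Polynomial.monomial_mul_X]
        rw [this, map_mul, hab, AdjoinRoot.mk_X, ← tt.eq_def, add_mul, mul_assoc,
          ← sq, root_sq, mul_one]
        ring


open scoped TensorProduct

lemma εκ (x : k) : εa (κ x) = x := by simp [κ, εa]
lemma εκ' (x : k) : εb (κ x) = x := by simp [κ, εb]

noncomputable def c0 (a : kZtwo k) : k := 2⁻¹ * (εa a + εb a)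
noncomputable def c1 (a : kZtwo k) : k := 2⁻¹ * (εa a - εb a)

variable (h2 : (2:k) ≠ 0)

include h2 in
lemma c0_eval (x y : k) : c0 (κ x + κ y * tt) = x := by
  simp only [c0, map_add, map_mul, εκ, εκ', εa_root, εb_root]
  field_simp
  ring

include h2 in
lemma c1_eval (x y : k) : c1 (κ x + κ y * tt) = y := by
  simp only [c1, map_add, map_mul, εκ, εκ', εa_root, εb_root]
  field_simp
  ring

lemma c0_add (a b : kZtwo k) : c0 (a + b) = c0 a + c0 b := by
  simp [c0]; ring
lemma c1_add (a b : kZtwo k) : c1 (a + b) = c1 a + c1 b := by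
  simp [c1]; ring

noncomputable def Δfun (a : kZtwo k) : kZtwo k ⊗[ℤ] kZtwo k :=
  κ (c0 a) ⊗ₜ[ℤ] 1 + (κ (c1 a) * tt) ⊗ₜ[ℤ] tt

noncomputable def ΔA : kZtwo k →+ kZtwo k ⊗[ℤ] kZtwo k :=
  AddMonoidHom.mk' Δfun (by
    intro a b
    simp only [Δfun, c0_add, c1_add, map_add, add_mul, TensorProduct.add_tmul]
    abel)

include h2 in
lemma Δ_eval (x y : k) :
    ΔA (κ x + κ y * tt) = κ x ⊗ₜ[ℤ] 1 + (κ y * tt) ⊗ₜ[ℤ] tt := by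
  show Δfun _ = _
  rw [Δfun, c0_eval h2, c1_eval h2]


include h2 in
lemma Δκ (x : k) : ΔA (κ x) = κ x ⊗ₜ[ℤ] 1 := by
  have := Δ_eval h2 x 0
  simpa using this

include h2 in
lemma Δκt (y : k) : ΔA (κ y * tt) = (κ y * tt) ⊗ₜ[ℤ] tt := by
  have := Δ_eval h2 0 y
  simpa using this

include h2 in
lemma Δ1 : ΔA (1 : kZtwo k) = 1 ⊗ₜ[ℤ] 1 := by
  have := Δκ h2 1
  simpa using this

include h2 in
lemma Δtt : ΔA (tt : kZtwo k) = tt ⊗ₜ[ℤ] tt := by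
  have := Δκt h2 1
  simpa using this

lemma htt : (tt : kZtwo k) * tt = 1 := by rw [← sq, root_sq]

lemma σκ (x : k) : σ (κ x) = κ x := σ.commutes x

noncomputable def SA : kZtwo k ≃+ kZtwo k :=
  { toFun := σ, invFun := σ, left_inv := σσ, right_inv := σσ,
    map_add' := map_add σ }

open HopfAlgd in
set_option maxHeartbeats 1000000 in
noncomputable def Bdef (h2 : (2:k) ≠ 0) : LeftBialgebroid (kZtwo k) k where
  s := κ
  t := κ.toAddMonoidHom
  t_one := map_one κ
  t_mul := fun l l' => by simp [map_mul, mul_comm]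
  st_comm := fun l l' => mul_comm _ _
  Δ := ΔA
  π := εa.toRingHom.toAddMonoidHom
  coassoc := fun a => by
    obtain ⟨x, y, rfl⟩ := decomp a
    have e : (LinearMap.lTensor (kZtwo k) ΔA.toIntLinearMap) (ΔA (κ x + κ y * tt))
        - @id (kZtwo k ⊗[ℤ] (kZtwo k ⊗[ℤ] kZtwo k)) ((TensorProduct.assoc ℤ (kZtwo k) (kZtwo k) (kZtwo k))
          ((LinearMap.rTensor (kZtwo k) ΔA.toIntLinearMap) (ΔA (κ x + κ y * tt)))) = 0 := by
      rw [Δ_eval h2]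
      simp only [map_add, LinearMap.lTensor_tmul, LinearMap.rTensor_tmul,
        AddMonoidHom.coe_toIntLinearMap, Δ1 h2, Δtt h2, Δκ h2, Δκt h2,
        TensorProduct.assoc_tmul, id_eq]
      erw [map_add, TensorProduct.assoc_tmul, TensorProduct.assoc_tmul]
      exact sub_self _
    rw [e]; exact zero_mem _
  cros := fun a l => by
    obtain ⟨x, y, rfl⟩ := decomp a
    rw [Δ_eval h2]
    have e : (LinearMap.rTensor (kZtwo k) (LinearMap.mulRight ℤ (κ.toAddMonoidHom l)))
          (κ x ⊗ₜ[ℤ] 1 + (κ y * tt) ⊗ₜ[ℤ] tt)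
        - (LinearMap.lTensor (kZtwo k) (LinearMap.mulRight ℤ (κ l)))
          (κ x ⊗ₜ[ℤ] 1 + (κ y * tt) ⊗ₜ[ℤ] tt)
        = ((κ l * κ x) ⊗ₜ[ℤ] (1:kZtwo k) - κ x ⊗ₜ[ℤ] (κ l * 1))
          + ((κ l * (κ y * tt)) ⊗ₜ[ℤ] tt - (κ y * tt) ⊗ₜ[ℤ] (κ l * tt)) := by
      simp only [map_add, LinearMap.rTensor_tmul, LinearMap.lTensor_tmul,
        LinearMap.mulRight_apply, RingHom.toAddMonoidHom_eq_coe,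
        AddMonoidHom.coe_coe, mul_one, one_mul]
      rw [mul_comm (κ x) (κ l), mul_comm (κ y * tt) (κ l), mul_comm tt (κ l)]
      abel
    rw [e]
    exact add_mem (Submodule.subset_span ⟨l, κ x, 1, rfl⟩)
      (Submodule.subset_span ⟨l, κ y * tt, tt, rfl⟩)
  Δ_one := by rw [Δ1 h2, sub_self]; exact zero_mem _
  Δ_mul := fun a b => by
    obtain ⟨x, y, rfl⟩ := decomp a
    obtain ⟨x', y', rfl⟩ := decomp b
    have hab : (κ x + κ y * tt) * (κ x' + κ y' * tt)
        = κ (x*x'+y*y') + κ (x*y'+y*x') * tt := by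
      simp only [map_add, map_mul]
      linear_combination (κ y * κ y' : kZtwo k) * root_sq (k := k)
    have h4 : κ y * tt * (κ y' * tt) = κ (y*y') := by
      rw [map_mul]; linear_combination (κ y * κ y' : kZtwo k) * htt (k := k)
    have h2' : κ x * (κ y' * tt) = κ (x*y') * tt := by rw [map_mul]; ring
    have h3' : κ y * tt * κ x' = κ (y*x') * tt := by rw [map_mul]; ring
    have h1' : κ x * κ x' = κ (x*x') := (map_mul κ x x').symm
    have e : ΔA ((κ x + κ y * tt) * (κ x' + κ y' * tt))
        - ΔA (κ x + κ y * tt) * ΔA (κ x' + κ y' * tt) = 0 := by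
      rw [hab, Δ_eval h2, Δ_eval h2, Δ_eval h2]
      simp only [add_mul, mul_add, Algebra.TensorProduct.tmul_mul_tmul, one_mul, mul_one,
        htt, h1', h2', h3', h4]
      simp only [map_add, add_mul, TensorProduct.add_tmul]
      abel
    rw [e]; exact zero_mem _
  counit_s := fun a => by
    obtain ⟨x, y, rfl⟩ := decomp a
    rw [Δ_eval h2]
    simp [εκ, εa_root, LinearMap.mul'_apply]
  counit_t := fun a => by
    obtain ⟨x, y, rfl⟩ := decomp a
    rw [Δ_eval h2]
    simp only [map_add, LinearMap.lTensor_tmul, AddMonoidHom.coe_toIntLinearMap,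
      AddMonoidHom.coe_comp, Function.comp_apply, RingHom.toAddMonoidHom_eq_coe,
      AddMonoidHom.coe_coe, AlgHom.toRingHom_eq_coe, RingHom.coe_coe,
      TensorProduct.comm_tmul, LinearMap.mul'_apply, εκ, εa_root, map_one, map_mul,
      mul_one, one_mul]
  π_one := map_one εa
  π_s := fun a b => by simp [map_mul, εκ]
  π_t := fun a b => by simp [map_mul, εκ]
  π_bimod := fun l l' a => by simp [map_mul, εκ]; ring

lemma SA_apply (x : kZtwo k) : SA x = σ x := rfl
lemma SA_symm_apply (x : kZtwo k) : SA.symm x = σ x := rfl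

lemma m13'_tmul {A : Type*} [Ring A] (u v z : A) :
    HopfAlgd.m13' A ((u ⊗ₜ[ℤ] v) ⊗ₜ[ℤ] z) = (u * z) ⊗ₜ[ℤ] v := by
  show (LinearMap.rTensor A (LinearMap.mul' ℤ A)) ((TensorProduct.assoc ℤ A A A).symm
    ((LinearMap.lTensor A (TensorProduct.comm ℤ A A).toLinearMap)
      ((TensorProduct.assoc ℤ A A A) ((u ⊗ₜ[ℤ] v) ⊗ₜ[ℤ] z)))) = _
  simp [HopfAlgd.m13', TensorProduct.assoc_tmul, TensorProduct.comm_tmul,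
    TensorProduct.assoc_symm_tmul, LinearMap.mul'_apply]

lemma m23_tmul {A : Type*} [Ring A] (x y z : A) :
    HopfAlgd.m23 A (x ⊗ₜ[ℤ] (y ⊗ₜ[ℤ] z)) = y ⊗ₜ[ℤ] (z * x) := by
  show (LinearMap.lTensor A (LinearMap.mul' ℤ A)) ((TensorProduct.assoc ℤ A A A)
    ((TensorProduct.comm ℤ A (A ⊗[ℤ] A)) (x ⊗ₜ[ℤ] (y ⊗ₜ[ℤ] z)))) = _
  simp [HopfAlgd.m23, TensorProduct.assoc_tmul, TensorProduct.comm_tmul,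
    LinearMap.mul'_apply]
  erw [TensorProduct.assoc_tmul]
  simp [LinearMap.mul'_apply]

lemma σtt : σ (tt : kZtwo k) = -tt := σ_root

lemma gen_mem (h2 : (2:k) ≠ 0) (l : k) (a b : kZtwo k) :
    (κ l * a) ⊗ₜ[ℤ] b - a ⊗ₜ[ℤ] (κ l * b) ∈ (Bdef h2).rel :=
  Submodule.subset_span ⟨l, a, b, rfl⟩

lemma BΔ (h2 : (2:k) ≠ 0) : (Bdef h2).Δ = ΔA := rfl

open HopfAlgd in
set_option maxHeartbeats 1000000 in
lemma hopf (h2 : (2:k) ≠ 0) : IsHopfAlgebroid (Bdef h2) SA where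
  anti_mul a b := by rw [SA_apply, SA_apply, SA_apply, map_mul, mul_comm]
  one_map := map_one σ
  S_t l := σκ l
  axs a := by
    obtain ⟨x, y, rfl⟩ := decomp a
    simp only [HopfAlgd.axsExpr, BΔ, LinearMap.comp_apply]
    have hσ2 : σ (κ y * tt) = -(κ y * tt) := by rw [map_mul, σκ, σtt]; ring
    have e : (m13' (kZtwo k))
          ((LinearMap.rTensor (kZtwo k)
            (ΔA.toIntLinearMap ∘ₗ SA.toAddMonoidHom.toIntLinearMap))
            (ΔA (κ x + κ y * tt)))
          - (1 : kZtwo k) ⊗ₜ[ℤ] SA (κ x + κ y * tt)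
        = ((κ x * 1) ⊗ₜ[ℤ] (1 : kZtwo k) - 1 ⊗ₜ[ℤ] (κ x * 1))
          + (-((κ y * 1) ⊗ₜ[ℤ] tt - 1 ⊗ₜ[ℤ] (κ y * tt))) := by
      rw [Δ_eval h2]
      simp only [map_add, LinearMap.rTensor_tmul, LinearMap.comp_apply,
        AddMonoidHom.coe_toIntLinearMap, AddEquiv.coe_toAddMonoidHom, SA_apply,
        σκ, hσ2, map_neg, Δκ h2, Δκt h2, TensorProduct.neg_tmul,
        TensorProduct.tmul_neg, mul_neg, neg_mul, m13'_tmul, map_add σ, mul_one]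
      rw [mul_assoc, htt, mul_one]
      rw [TensorProduct.tmul_add]
      abel_nf
      simp only [neg_smul, one_smul, TensorProduct.tmul_neg, TensorProduct.neg_tmul,
        neg_neg]
      try abel
    erw [e]
    exact add_mem (gen_mem h2 x 1 1) (neg_mem (gen_mem h2 y 1 tt))
  axsi a := by
    obtain ⟨x, y, rfl⟩ := decomp a
    simp only [HopfAlgd.axsiExpr, BΔ, LinearMap.comp_apply]
    have hσ2 : σ (tt : kZtwo k) = -tt := σtt
    have e : (m23 (kZtwo k))
          ((LinearMap.lTensor (kZtwo k)
            (ΔA.toIntLinearMap ∘ₗ SA.symm.toAddMonoidHom.toIntLinearMap))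
            (ΔA (κ x + κ y * tt)))
          - SA.symm (κ x + κ y * tt) ⊗ₜ[ℤ] (1 : kZtwo k)
        = (-((κ x * 1) ⊗ₜ[ℤ] (1 : kZtwo k) - 1 ⊗ₜ[ℤ] (κ x * 1)))
          + ((κ y * tt) ⊗ₜ[ℤ] (1 : kZtwo k) - tt ⊗ₜ[ℤ] (κ y * 1)) := by
      rw [Δ_eval h2]
      simp only [map_add, LinearMap.lTensor_tmul, LinearMap.comp_apply,
        AddMonoidHom.coe_toIntLinearMap, AddEquiv.coe_toAddMonoidHom, SA_symm_apply,
        σκ, σtt, map_one σ, map_neg, Δ1 h2, Δtt h2, TensorProduct.neg_tmul,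
        TensorProduct.tmul_neg, mul_neg, neg_mul, m23_tmul, map_add σ, map_mul σ,
        one_mul, mul_one]
      have : (tt : kZtwo k) * (κ y * tt) = κ y := by
        rw [mul_comm (κ y) tt, ← mul_assoc, htt, one_mul]
      rw [this]
      rw [TensorProduct.add_tmul]
      abel_nf
      simp only [neg_smul, one_smul, TensorProduct.tmul_neg, TensorProduct.neg_tmul,
        neg_neg]
      try abel
    erw [e]
    exact add_mem (neg_mem (gen_mem h2 x 1 1)) (gen_mem h2 y tt 1)

end Scratch

end Aux

open HopfAlgd in
/-- Over a field `k` of characteristic `≠ 2`, the group bialgebra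
`kZ₂ = k⟨t | t² = 1⟩` (viewed as a left bialgebroid over `k`) together with `S(t) = -t`
is a Hopf algebroid in the sense of Böhm–Szlachányi, but there is no Lu-type section `ξ`
of the canonical projection with `m ∘ (id ⊗ S) ∘ ξ ∘ γ_L = s_L ∘ π_L`. -/
theorem statement8 (k : Type*) [Field k] (hchar : ringChar k ≠ 2) :
    ∃ (B : LeftBialgebroid (kZtwo k) k) (S : kZtwo k ≃+ kZtwo k),
      IsHopfAlgebroid B S ∧
      B.s = algebraMap k (kZtwo k) ∧
      (∀ c : k, B.t c = algebraMap k (kZtwo k) c) ∧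
      (B.Δ (AdjoinRoot.root _)
        - (AdjoinRoot.root _) ⊗ₜ[ℤ] (AdjoinRoot.root _) ∈ B.rel) ∧
      B.π (AdjoinRoot.root _) = 1 ∧
      S (AdjoinRoot.root _) = - AdjoinRoot.root _ ∧
      -- failure of the Lu axiom: no section of the canonical projection implements the
      -- antipode axiom `m ∘ (id ⊗ S) ∘ ξ ∘ γ_L = s_L ∘ π_L`
      ¬ ∃ ξ : kZtwo k ⊗[ℤ] kZtwo k →+ kZtwo k ⊗[ℤ] kZtwo k,
          (∀ x, ξ x - x ∈ B.rel) ∧ (∀ y ∈ B.rel, ξ y = 0) ∧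
          (∀ a, LinearMap.mul' ℤ (kZtwo k)
              ((LinearMap.lTensor (kZtwo k) S.toAddMonoidHom.toIntLinearMap) (ξ (B.Δ a)))
            = B.s (B.π a)) := by
  classical
  have h2 : (2 : k) ≠ 0 := by
    intro h
    have hdvd : ringChar k ∣ 2 := by
      have : ((2 : ℕ) : k) = 0 := by exact_mod_cast h
      exact ringChar.dvd this
    rcases (Nat.prime_two.eq_one_or_self_of_dvd _ hdvd) with h1 | h1
    · have : ((1 : ℕ) : k) = 0 := (ringChar.spec k 1).mpr (h1 ▸ dvd_refl _)
      simp at this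
    · exact hchar h1
  refine ⟨Scratch.Bdef h2, Scratch.SA, Scratch.hopf h2, rfl, fun c => rfl, ?_, ?_, ?_, ?_⟩
  · show Scratch.ΔA Scratch.tt - Scratch.tt ⊗ₜ[ℤ] Scratch.tt ∈ (Scratch.Bdef h2).rel
    rw [Scratch.Δtt h2, sub_self]
    exact zero_mem _
  · exact Scratch.εa_root
  · exact Scratch.σ_root
  · rintro ⟨ξ, hξ1, hξ2, hξ3⟩
    set A := kZtwo k
    have key : ∀ z ∈ (Scratch.Bdef h2).rel,
        LinearMap.mul' ℤ A
          ((LinearMap.lTensor A Scratch.SA.toAddMonoidHom.toIntLinearMap) z) = 0 := by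
      intro z hz
      refine Submodule.span_induction ?_ ?_ ?_ ?_ hz
      · rintro w ⟨l, a, b, rfl⟩
        simp only [map_sub, LinearMap.lTensor_tmul, AddMonoidHom.coe_toIntLinearMap,
          AddEquiv.coe_toAddMonoidHom, Scratch.SA_apply, LinearMap.mul'_apply]
        have hs : Scratch.σ ((Scratch.Bdef h2).s l * b)
            = Scratch.κ l * Scratch.σ b := by
          show Scratch.σ (Scratch.κ l * b) = _
          rw [map_mul, Scratch.σκ]
        rw [hs]
        show Scratch.κ l * a * Scratch.σ b - a * (Scratch.κ l * Scratch.σ b) = 0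
        ring
      · simp
      · intro u v _ _ hu hv
        rw [map_add, map_add, hu, hv, add_zero]
      · intro n u _ hu
        rw [map_zsmul, map_zsmul, hu, smul_zero]
    have h3 := hξ3 Scratch.tt
    have hΔ : (Scratch.Bdef h2).Δ Scratch.tt
        = Scratch.tt ⊗ₜ[ℤ] Scratch.tt := by
      rw [Scratch.BΔ h2, Scratch.Δtt h2]
    rw [hΔ] at h3
    have hmem := hξ1 (Scratch.tt ⊗ₜ[ℤ] Scratch.tt)
    have hsplit : ξ (Scratch.tt ⊗ₜ[ℤ] Scratch.tt)
        = Scratch.tt ⊗ₜ[ℤ] Scratch.tt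
          + (ξ (Scratch.tt ⊗ₜ[ℤ] Scratch.tt) - Scratch.tt ⊗ₜ[ℤ] Scratch.tt) := by
      ring
    rw [hsplit, map_add, map_add, key _ hmem, add_zero] at h3
    have hval : LinearMap.mul' ℤ A
        ((LinearMap.lTensor A Scratch.SA.toAddMonoidHom.toIntLinearMap)
          (Scratch.tt ⊗ₜ[ℤ] Scratch.tt)) = -1 := by
      simp only [LinearMap.lTensor_tmul, AddMonoidHom.coe_toIntLinearMap,
        AddEquiv.coe_toAddMonoidHom, Scratch.SA_apply, Scratch.σtt,
        LinearMap.mul'_apply, mul_neg, Scratch.htt]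
      exact (mul_neg Scratch.tt Scratch.tt).trans (congrArg Neg.neg Scratch.htt)
    rw [hval] at h3
    have hrhs : (Scratch.Bdef h2).s ((Scratch.Bdef h2).π Scratch.tt) = 1 := by
      show Scratch.κ (Scratch.εa Scratch.tt) = 1
      rw [Scratch.εa_root, map_one]
    rw [hrhs] at h3
    have h20 : (2 : A) = 0 := by linear_combination -h3
    have := congrArg Scratch.εa h20
    rw [map_ofNat, map_zero] at this
    exact h2 (by exact_mod_cast this)
end

section
/- Let T_q be the algebraic quantum torus over a field k: the unital k-algebra generated by invertible U, V with UV = qVU for a unit q ∈ k. Equip T_q with the left bialgebroid structure over the subalgebra L = k[U, U⁻¹]: s_L = t_L the inclusion, γ_L(Uⁿ Vᵐ) = Uⁿ Vᵐ ⊗_L Vᵐ, π_L(Uⁿ Vᵐ) = Uⁿ. Define S(Uⁿ Vᵐ) = V⁻ᵐ Uⁿ. Then (this left bialgebroid, S) is a Hopf algebroid: S is a ring anti-automorphism satisfying S ∘ t_L = s_L and the two antipode axioms S⁻¹(a₍₂₎)₍₁'₎ ⊗ S⁻¹(a₍₂₎)₍₂'₎ a₍₁₎ = S⁻¹(a) ⊗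 1 and S(a₍₁₎)₍₁'₎ a₍₂₎ ⊗ S(a₍₁₎)₍₂'₎ = 1 ⊗ S(a). -/
open scoped TensorProduct

namespace S9
variable {k : Type*} [Field k] {A : Type*} [Ring A] [Algebra k A]

def qk (q : kˣ) (z : ℤ) : k := ((q ^ z : kˣ) : k)

lemma qk_add (q : kˣ) (x y : ℤ) : qk q (x + y) = qk q x * qk q y := by
  simp [qk, zpow_add]

lemma qk_zero (q : kˣ) : qk q 0 = 1 := by simp [qk]

lemma qk_mul_neg (q : kˣ) (x : ℤ) : qk q x * qk q (-x) = 1 := by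
  rw [← qk_add]; simp [qk]

lemma qk_smul_smul (q : kˣ) (x y : ℤ) (a : A) : qk q x • qk q y • a = qk q (x + y) • a := by
  rw [smul_smul, ← qk_add]

section comm
variable (q : kˣ) (U V : Aˣ) (hq : ((U : A) * (V : A)) = (q : k) • ((V : A) * (U : A)))

include hq

lemma uvinv : (U : A) * ((V⁻¹ : Aˣ) : A) = qk q (-1) • (((V⁻¹ : Aˣ) : A) * (U : A)) := by
  have h2 : ((V⁻¹ : Aˣ) : A) * (U : A) = (q : k) • ((U : A) * ((V⁻¹ : Aˣ) : A)) := by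
    calc ((V⁻¹ : Aˣ) : A) * (U : A)
        = ((V⁻¹ : Aˣ) : A) * ((U : A) * (V : A)) * ((V⁻¹ : Aˣ) : A) := by
          simp [mul_assoc]
      _ = ((V⁻¹ : Aˣ) : A) * ((q : k) • ((V : A) * (U : A))) * ((V⁻¹ : Aˣ) : A) := by rw [hq]
      _ = (q : k) • ((U : A) * ((V⁻¹ : Aˣ) : A)) := by
          simp [mul_smul_comm, smul_mul_assoc, mul_assoc]
  have h3 : qk q (-1) • (((V⁻¹ : Aˣ) : A) * (U : A))
      = (qk q (-1) * (q:k)) • ((U : A) * ((V⁻¹ : Aˣ) : A)) := by rw [h2, smul_smul]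
  rw [h3]
  have h4 : qk q (-1) * (q:k) = 1 := by
    rw [qk, ← Units.val_mul]; norm_num
  rw [h4, one_smul]

/-- `u * v^m = q^m • (v^m * u)` -/
lemma u_vpow (m : ℤ) :
    (U : A) * ((V ^ m : Aˣ) : A) = qk q m • (((V ^ m : Aˣ) : A) * (U : A)) := by
  induction m using Int.induction_on with
  | zero => simp [qk]
  | succ n ih =>
      have hv : ((V ^ ((n : ℤ) + 1) : Aˣ) : A) = ((V ^ (n : ℤ) : Aˣ) : A) * (V : A) := by
        rw [zpow_add_one]; simp
      rw [hv, ← mul_assoc, ih, smul_mul_assoc, mul_assoc, hq, mul_smul_comm, smul_smul]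
      have : qk q ↑n * ↑q = qk q (↑n + 1) := by rw [qk_add]; simp [qk]
      rw [this, mul_assoc]
  | pred n ih =>
      have hv : ((V ^ (-(n : ℤ) - 1) : Aˣ) : A)
          = ((V ^ (-(n : ℤ)) : Aˣ) : A) * ((V⁻¹ : Aˣ) : A) := by
        rw [sub_eq_add_neg, zpow_add, zpow_neg_one]; simp
      rw [hv, ← mul_assoc, ih, smul_mul_assoc, mul_assoc, uvinv q U V hq, mul_smul_comm,
        smul_smul, ← qk_add]
      have : -(n:ℤ) + -1 = -(n:ℤ) - 1 := by ring
      rw [this, mul_assoc]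

/-- `u⁻¹ * v^m = q^(-m) • (v^m * u⁻¹)` -/
lemma uinv_vpow (m : ℤ) :
    ((U⁻¹ : Aˣ) : A) * ((V ^ m : Aˣ) : A)
      = qk q (-m) • (((V ^ m : Aˣ) : A) * ((U⁻¹ : Aˣ) : A)) := by
  have h2 : ((V ^ m : Aˣ) : A) * ((U⁻¹ : Aˣ) : A)
      = qk q m • (((U⁻¹ : Aˣ) : A) * ((V ^ m : Aˣ) : A)) := by
    calc ((V ^ m : Aˣ) : A) * ((U⁻¹ : Aˣ) : A)
        = ((U⁻¹ : Aˣ) : A) * ((U : A) * ((V ^ m : Aˣ) : A)) * ((U⁻¹ : Aˣ) : A) := by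
          simp [mul_assoc]
      _ = ((U⁻¹ : Aˣ) : A) * (qk q m • (((V ^ m : Aˣ) : A) * (U : A))) * ((U⁻¹ : Aˣ) : A) := by
          rw [u_vpow q U V hq]
      _ = qk q m • (((U⁻¹ : Aˣ) : A) * ((V ^ m : Aˣ) : A)) := by
          simp [mul_smul_comm, smul_mul_assoc, mul_assoc]
  rw [h2, smul_smul, ← qk_add]
  have : -m + m = 0 := by ring
  rw [this, qk_zero, one_smul]

/-- `u^n * v^m = q^(n*m) • (v^m * u^n)` -/
lemma upow_vpow (n m : ℤ) :
    ((U ^ n : Aˣ) : A) * ((V ^ m : Aˣ) : A)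
      = qk q (n * m) • (((V ^ m : Aˣ) : A) * ((U ^ n : Aˣ) : A)) := by
  induction n using Int.induction_on with
  | zero => simp [qk]
  | succ n ih =>
      have hu : ((U ^ ((n : ℤ) + 1) : Aˣ) : A) = (U : A) * ((U ^ (n : ℤ) : Aˣ) : A) := by
        rw [add_comm, zpow_add, zpow_one]; simp
      rw [hu, mul_assoc, ih, mul_smul_comm, ← mul_assoc, u_vpow q U V hq, smul_mul_assoc,
        smul_smul, ← qk_add, mul_assoc]
      have : (n:ℤ) * m + m = ((n:ℤ) + 1) * m := by ring
      rw [this]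
  | pred n ih =>
      have hu : ((U ^ (-(n : ℤ) - 1) : Aˣ) : A) = ((U⁻¹ : Aˣ) : A) * ((U ^ (-(n : ℤ)) : Aˣ) : A) := by
        rw [sub_eq_add_neg, add_comm, zpow_add, zpow_neg_one]; simp
      rw [hu, mul_assoc, ih, mul_smul_comm, ← mul_assoc, uinv_vpow q U V hq, smul_mul_assoc,
        smul_smul, ← qk_add, mul_assoc]
      have : -(n:ℤ) * m + -m = (-(n:ℤ) - 1) * m := by ring
      rw [this]

/-- `v^m * u^n = q^(-(n*m)) • (u^n * v^m)` -/
lemma vpow_upow (n m : ℤ) :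
    ((V ^ m : Aˣ) : A) * ((U ^ n : Aˣ) : A)
      = qk q (-(n * m)) • (((U ^ n : Aˣ) : A) * ((V ^ m : Aˣ) : A)) := by
  rw [upow_vpow q U V hq n m, smul_smul, ← qk_add]
  have : -(n*m) + n * m = 0 := by ring
  rw [this, qk_zero, one_smul]

end comm

variable (q : kˣ) (U V : Aˣ)

abbrev LB (k : Type*) [Field k] {A : Type*} [Ring A] [Algebra k A] (U : Aˣ) : Subalgebra k A :=
  Algebra.adjoin k ({(U : A), ((U⁻¹ : Aˣ) : A)} : Set A)

lemma upow_mem (n : ℤ) : ((U ^ n : Aˣ) : A) ∈ LB k U := by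
  induction n using Int.induction_on with
  | zero => simpa using (LB k U).one_mem
  | succ n ih =>
      have : ((U ^ ((n:ℤ) + 1) : Aˣ) : A) = ((U ^ (n:ℤ) : Aˣ) : A) * (U : A) := by
        rw [zpow_add_one]; simp
      rw [this]
      exact mul_mem ih (Algebra.subset_adjoin (by simp))
  | pred n ih =>
      have : ((U ^ (-(n:ℤ) - 1) : Aˣ) : A) = ((U ^ (-(n:ℤ)) : Aˣ) : A) * ((U⁻¹ : Aˣ) : A) := by
        rw [sub_eq_add_neg, zpow_add, zpow_neg_one]; simp
      rw [this]
      exact mul_mem ih (Algebra.subset_adjoin (by simp))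

lemma commute_L : ∀ x ∈ LB k U, ∀ y ∈ LB k U, Commute x y := by
  have cu : ∀ y ∈ LB k U, Commute ((U : A)) y := by
    intro y hy
    induction hy using Algebra.adjoin_induction with
    | mem x hx =>
        rcases hx with h | h
        · subst h; exact Commute.refl _
        · subst h; exact (Commute.refl (U:A)).units_inv_right
    | algebraMap r => exact (Algebra.commutes r (U:A)).symm
    | add x y _ _ hx hy => exact hx.add_right hy
    | mul x y _ _ hx hy => exact hx.mul_right hy
  have cuinv : ∀ y ∈ LB k U, Commute (((U⁻¹ : Aˣ) : A)) y := by
    intro y hy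
    induction hy using Algebra.adjoin_induction with
    | mem x hx =>
        rcases hx with h | h
        · subst h; exact ((Commute.refl (U:A)).units_inv_left)
        · subst h; exact Commute.refl _
    | algebraMap r => exact (Algebra.commutes r _).symm
    | add x y _ _ hx hy => exact hx.add_right hy
    | mul x y _ _ hx hy => exact hx.mul_right hy
  intro x hx
  induction hx using Algebra.adjoin_induction with
  | mem x hxx =>
      intro y hy
      rcases hxx with h | h
      · subst h; exact cu y hy
      · subst h; exact cuinv y hy
  | algebraMap r => intro y hy; exact Algebra.commutes r y
  | add x y _ _ hx hy => intro z hz; exact (hx z hz).add_left (hy z hz)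
  | mul x y _ _ hx hy => intro z hz; exact (hx z hz).mul_left (hy z hz)

section withbas
variable (bas : Module.Basis (ℤ × ℤ) k A)
  (hq : ((U : A) * (V : A)) = (q : k) • ((V : A) * (U : A)))
  (hbas : ∀ p : ℤ × ℤ, bas p = ((U ^ p.1 * V ^ p.2 : Aˣ) : A))

include hbas

lemma bas_eq (n m : ℤ) : (bas (n, m) : A) = ((U ^ n : Aˣ) : A) * ((V ^ m : Aˣ) : A) := by
  rw [hbas (n, m)]; simp

lemma bas_u (n : ℤ) : (bas (n, 0) : A) = ((U ^ n : Aˣ) : A) := by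
  rw [bas_eq U V bas hbas]; simp

lemma bas_v (m : ℤ) : (bas (0, m) : A) = ((V ^ m : Aˣ) : A) := by
  rw [bas_eq U V bas hbas]; simp

lemma bas_one : (bas (0, 0) : A) = 1 := by rw [bas_u U V bas hbas]; simp

include hq

lemma basmul (n m r s : ℤ) :
    bas (n, m) * bas (r, s) = qk q (-(m * r)) • bas (n + r, m + s) := by
  rw [bas_eq U V bas hbas, bas_eq U V bas hbas, bas_eq U V bas hbas]
  rw [mul_assoc, show ((V^m : Aˣ):A) * (((U^r : Aˣ):A) * ((V^s : Aˣ):A))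
      = (((V^m : Aˣ):A) * ((U^r : Aˣ):A)) * ((V^s : Aˣ):A) from (mul_assoc _ _ _).symm,
    vpow_upow q U V hq r m, smul_mul_assoc, mul_smul_comm]
  have h1 : ((U^n : Aˣ):A) * (((U^r : Aˣ):A) * ((V^m : Aˣ):A) * ((V^s : Aˣ):A))
      = ((U^(n+r) : Aˣ):A) * ((V^(m+s) : Aˣ):A) := by
    rw [mul_assoc ((U^r : Aˣ):A), ← mul_assoc, ← Units.val_mul, ← Units.val_mul, ← zpow_add,
      ← zpow_add]
  rw [h1]
  have : -(r * m) = -(m * r) := by ring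
  rw [this]

end withbas

section tensorsmul
variable {M N : Type*} [AddCommGroup M] [AddCommGroup N]

lemma lTensor_ksmul (f : M →ₗ[ℤ] N) (c : k) (x : A ⊗[ℤ] M) :
    (LinearMap.lTensor A f) (c • x) = c • (LinearMap.lTensor A f) x := by
  induction x using TensorProduct.induction_on with
  | zero => simp
  | tmul a m => simp [TensorProduct.smul_tmul']
  | add x y hx hy => simp [smul_add, hx, hy]

lemma rTensor_ksmul {B : Type*} [AddCommGroup B] [Module k B] (f : A →ₗ[ℤ] B)
    (hf : ∀ (c : k) (a : A), f (c • a) = c • f a) (c : k) (x : A ⊗[ℤ] M) :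
    (LinearMap.rTensor M f) (c • x) = c • (LinearMap.rTensor M f) x := by
  induction x using TensorProduct.induction_on with
  | zero => simp
  | tmul a m => simp [TensorProduct.smul_tmul', hf]
  | add x y hx hy => simp [smul_add, hx, hy]

lemma mul'_ksmul (c : k) (x : A ⊗[ℤ] A) :
    (LinearMap.mul' ℤ A) (c • x) = c • (LinearMap.mul' ℤ A) x := by
  induction x using TensorProduct.induction_on with
  | zero => simp
  | tmul a b => simp [TensorProduct.smul_tmul', smul_mul_assoc]
  | add x y hx hy => simp [smul_add, hx, hy]

lemma mulcomm'_ksmul (c : k) (x : A ⊗[ℤ] A) :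
    (LinearMap.mul' ℤ A) ((TensorProduct.comm ℤ A A) (c • x))
      = c • (LinearMap.mul' ℤ A) ((TensorProduct.comm ℤ A A) x) := by
  induction x using TensorProduct.induction_on with
  | zero => simp
  | tmul a b => simp [TensorProduct.smul_tmul', mul_smul_comm]
  | add x y hx hy => simp [smul_add, hx, hy]

lemma assoc_ksmul (c : k) (x : (A ⊗[ℤ] A) ⊗[ℤ] A) :
    (TensorProduct.assoc ℤ A A A) (c • x) = c • (TensorProduct.assoc ℤ A A A) x := by
  induction x using TensorProduct.induction_on with
  | zero => erw [smul_zero, map_zero, smul_zero]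
  | tmul y z =>
      rw [TensorProduct.smul_tmul']
      induction y using TensorProduct.induction_on with
      | zero => erw [smul_zero, TensorProduct.zero_tmul, map_zero, smul_zero]
      | tmul a b => rw [TensorProduct.smul_tmul']; rfl
      | add y₁ y₂ h₁ h₂ =>
          rw [smul_add, TensorProduct.add_tmul, TensorProduct.add_tmul]; erw [map_add, h₁, h₂,
            map_add, smul_add]
  | add x y hx hy => erw [smul_add, map_add, map_add, hx, hy, smul_add]

lemma m13'_tmul (a b z : A) :
    HopfAlgd.m13' A ((a ⊗ₜ[ℤ] b) ⊗ₜ[ℤ] z) = (a * z) ⊗ₜ[ℤ] b := by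
  rfl

lemma m23_tmul (x y z : A) :
    HopfAlgd.m23 A (x ⊗ₜ[ℤ] (y ⊗ₜ[ℤ] z)) = y ⊗ₜ[ℤ] (z * x) := by
  rfl

lemma m13'_ksmul (c : k) (x : (A ⊗[ℤ] A) ⊗[ℤ] A) :
    HopfAlgd.m13' A (c • x) = c • HopfAlgd.m13' A x := by
  induction x using TensorProduct.induction_on with
  | zero => simp
  | tmul y z =>
      rw [TensorProduct.smul_tmul']
      induction y using TensorProduct.induction_on with
      | zero => simp
      | tmul a b =>
          rw [TensorProduct.smul_tmul', m13'_tmul, m13'_tmul, TensorProduct.smul_tmul',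
            smul_mul_assoc]
      | add y₁ y₂ h₁ h₂ =>
          rw [smul_add, TensorProduct.add_tmul, TensorProduct.add_tmul, map_add, h₁, h₂,
            map_add, smul_add]
  | add x y hx hy => simp [smul_add, hx, hy]

end tensorsmul

section maps
variable (bas : Module.Basis (ℤ × ℤ) k A)

variable (k) in
def Un (n : ℤ) : LB k U := ⟨((U ^ n : Aˣ) : A), upow_mem U n⟩

noncomputable def Dl : A →ₗ[k] A ⊗[ℤ] A :=
  bas.constr k fun p => bas p ⊗ₜ[ℤ] bas (0, p.2)

noncomputable def Pl : A →ₗ[k] LB k U :=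
  bas.constr k fun p => Un k U p.1

noncomputable def Sl : A →ₗ[k] A :=
  bas.constr k fun p => qk q (p.1 * p.2) • bas (p.1, -p.2)

@[simp] lemma Dl_bas (n m : ℤ) : Dl bas (bas (n, m)) = bas (n, m) ⊗ₜ[ℤ] bas (0, m) := by
  simp [Dl]

@[simp] lemma Pl_bas (n m : ℤ) : Pl U bas (bas (n, m)) = Un k U n := by
  simp [Pl]

@[simp] lemma Sl_bas (n m : ℤ) : Sl q bas (bas (n, m)) = qk q (n * m) • bas (n, -m) := by
  simp [Sl]

lemma Sl_Sl : ∀ a : A, Sl q bas (Sl q bas a) = a := by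
  have h : (Sl q bas) ∘ₗ (Sl q bas) = LinearMap.id := by
    refine bas.ext fun p => ?_
    obtain ⟨n, m⟩ := p
    simp only [LinearMap.comp_apply, Sl_bas, map_smul, smul_smul, LinearMap.id_apply]
    rw [← qk_add]
    have : n * m + n * -m = 0 := by ring
    rw [this, qk_zero, one_smul, neg_neg]
  intro a
  exact DFunLike.congr_fun h a

/-- basis induction -/
lemma basis_ind {p : A → Prop} (h0 : p 0) (hb : ∀ n m : ℤ, p (bas (n, m)))
    (hs : ∀ (c : k) (a : A), p a → p (c • a)) (ha : ∀ a b, p a → p b → p (a + b)) :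
    ∀ a, p a := by
  intro a
  have hmem : a ∈ Submodule.span k (Set.range bas) := by rw [Module.Basis.span_eq]; trivial
  refine Submodule.span_induction ?_ h0 (fun x y _ _ hx hy => ha x y hx hy)
    (fun c x _ hx => hs c x hx) hmem
  rintro x ⟨⟨n, m⟩, rfl⟩
  exact hb n m

end maps

section rels

variable (k) in
/-- The relation submodule, concretely. -/
def Rl (U : Aˣ) : Submodule ℤ (A ⊗[ℤ] A) :=
  HopfAlgd.trel (fun (l : LB k U) a => (l : A) * a) (fun (l : LB k U) b => (l : A) * b)

lemma gen_mem (l : LB k U) (a b : A) :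
    ((l : A) * a) ⊗ₜ[ℤ] b - a ⊗ₜ[ℤ] ((l : A) * b) ∈ Rl k U :=
  Submodule.subset_span ⟨l, a, b, rfl⟩

lemma Rl_ksmul (c : k) {x : A ⊗[ℤ] A} (hx : x ∈ Rl k U) : c • x ∈ Rl k U := by
  refine Submodule.span_induction ?_ ?_ ?_ ?_ hx
  · rintro y ⟨l, a, b, rfl⟩
    rw [smul_sub, TensorProduct.smul_tmul', TensorProduct.smul_tmul', ← mul_smul_comm]
    exact gen_mem U l (c • a) b
  · simp
  · intro x y _ _ hx hy
    rw [smul_add]; exact add_mem hx hy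
  · intro z x _ hx
    rw [smul_comm]; exact Submodule.smul_mem _ z hx

end rels


section axlemmas
variable (bas : Module.Basis (ℤ × ℤ) k A)
  (hq : ((U : A) * (V : A)) = (q : k) • ((V : A) * (U : A)))
  (hbas : ∀ p : ℤ × ℤ, bas p = ((U ^ p.1 * V ^ p.2 : Aˣ) : A))

/-- multiplication by k-scalars in the tensor-square ring -/
lemma tsmul_mul (c : k) (x y : A ⊗[ℤ] A) : (c • x) * y = c • (x * y) := by
  induction x using TensorProduct.induction_on with
  | zero => simp
  | tmul a b =>
      induction y using TensorProduct.induction_on with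
      | zero => simp
      | tmul a' b' =>
          rw [TensorProduct.smul_tmul', Algebra.TensorProduct.tmul_mul_tmul,
            Algebra.TensorProduct.tmul_mul_tmul, TensorProduct.smul_tmul', smul_mul_assoc]
      | add y₁ y₂ h₁ h₂ => rw [mul_add, mul_add, h₁, h₂, smul_add]
  | add x₁ x₂ h₁ h₂ => rw [smul_add, add_mul, add_mul, h₁, h₂, smul_add]

lemma mul_tsmul (c : k) (x y : A ⊗[ℤ] A) : x * (c • y) = c • (x * y) := by
  induction x using TensorProduct.induction_on with
  | zero => simp
  | tmul a b =>
      induction y using TensorProduct.induction_on with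
      | zero => simp
      | tmul a' b' =>
          rw [TensorProduct.smul_tmul', Algebra.TensorProduct.tmul_mul_tmul,
            Algebra.TensorProduct.tmul_mul_tmul, TensorProduct.smul_tmul', mul_smul_comm]
      | add y₁ y₂ h₁ h₂ => rw [smul_add, mul_add, mul_add, h₁, h₂, smul_add]
  | add x₁ x₂ h₁ h₂ => rw [add_mul, add_mul, h₁, h₂, smul_add]

include hq

/-- conjugation by `V^m` preserves `L` -/
lemma cnj_mem (m : ℤ) {x : A} (hx : x ∈ LB k U) :
    ((V ^ m : Aˣ) : A) * x * ((V ^ (-m) : Aˣ) : A) ∈ LB k U := by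
  induction hx using Algebra.adjoin_induction with
  | mem y hy =>
      have hvv : ((V ^ m : Aˣ) : A) * ((V ^ (-m) : Aˣ) : A) = 1 := by
        rw [← Units.val_mul, ← zpow_add]; simp
      rcases hy with h | h
      · subst h
        have h1 : ((V ^ m : Aˣ) : A) * (U : A) = qk q (-m) • ((U : A) * ((V ^ m : Aˣ) : A)) := by
          have := vpow_upow q U V hq 1 m
          simpa using this
        rw [h1, smul_mul_assoc, mul_assoc, hvv, mul_one]
        exact Subalgebra.smul_mem _ (Algebra.subset_adjoin (by simp)) _
      · subst h
        have h1 : ((V ^ m : Aˣ) : A) * ((U⁻¹ : Aˣ) : A)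
            = qk q m • (((U⁻¹ : Aˣ) : A) * ((V ^ m : Aˣ) : A)) := by
          have := vpow_upow q U V hq (-1) m
          have e : ((U ^ (-1 : ℤ) : Aˣ) : A) = ((U⁻¹ : Aˣ) : A) := by simp
          rw [e] at this
          simpa using this
        rw [h1, smul_mul_assoc, mul_assoc, hvv, mul_one]
        exact Subalgebra.smul_mem _ (Algebra.subset_adjoin (by simp)) _
  | algebraMap r =>
      have : ((V ^ m : Aˣ) : A) * (algebraMap k A r) * ((V ^ (-m) : Aˣ) : A)
          = algebraMap k A r * (((V ^ m : Aˣ) : A) * ((V ^ (-m) : Aˣ) : A)) := by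
        rw [← Algebra.commutes r, mul_assoc]
      rw [this, ← Units.val_mul, ← zpow_add]
      simp only [add_neg_cancel, zpow_zero, Units.val_one, mul_one]
      exact Subalgebra.algebraMap_mem _ r
  | add x y _ _ hx hy =>
      have : ((V ^ m : Aˣ) : A) * (x + y) * ((V ^ (-m) : Aˣ) : A)
          = ((V ^ m : Aˣ) : A) * x * ((V ^ (-m) : Aˣ) : A)
            + ((V ^ m : Aˣ) : A) * y * ((V ^ (-m) : Aˣ) : A) := by
        rw [mul_add, add_mul]
      rw [this]; exact add_mem hx hy
  | mul x y _ _ hx hy =>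
      have hvv : ((V ^ (-m) : Aˣ) : A) * ((V ^ m : Aˣ) : A) = 1 := by
        rw [← Units.val_mul, ← zpow_add]; simp
      have : ((V ^ m : Aˣ) : A) * (x * y) * ((V ^ (-m) : Aˣ) : A)
          = (((V ^ m : Aˣ) : A) * x * ((V ^ (-m) : Aˣ) : A))
            * (((V ^ m : Aˣ) : A) * y * ((V ^ (-m) : Aˣ) : A)) := by
        have hc : ∀ w : A, ((V ^ (-m) : Aˣ) : A) * (((V ^ m : Aˣ) : A) * w) = w := fun w => by
          rw [← mul_assoc, hvv, one_mul]
        simp [mul_assoc, hc]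
      rw [this]; exact mul_mem hx hy

omit hq in
/-- `v^m * l = cnj(l) * v^m` -/
lemma vpow_mul_L (m : ℤ) (x : A) :
    ((V ^ m : Aˣ) : A) * x
      = (((V ^ m : Aˣ) : A) * x * ((V ^ (-m) : Aˣ) : A)) * ((V ^ m : Aˣ) : A) := by
  have hvv : ((V ^ (-m) : Aˣ) : A) * ((V ^ m : Aˣ) : A) = 1 := by
    rw [← Units.val_mul, ← zpow_add]; simp
  rw [mul_assoc, hvv, mul_one]

end axlemmas


section mapax
variable (bas : Module.Basis (ℤ × ℤ) k A)
  (hq : ((U : A) * (V : A)) = (q : k) • ((V : A) * (U : A)))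
  (hbas : ∀ p : ℤ × ℤ, bas p = ((U ^ p.1 * V ^ p.2 : Aˣ) : A))

include hbas

lemma u_bas (n m : ℤ) : (U : A) * bas (n, m) = bas (1 + n, m) := by
  rw [bas_eq U V bas hbas, bas_eq U V bas hbas, ← mul_assoc]
  congr 1
  rw [← Units.val_mul]
  congr 1
  rw [zpow_add, zpow_one]

lemma uinv_bas (n m : ℤ) : ((U⁻¹ : Aˣ) : A) * bas (n, m) = bas (-1 + n, m) := by
  rw [bas_eq U V bas hbas, bas_eq U V bas hbas, ← mul_assoc, ← zpow_neg_one U, ← Units.val_mul,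
    ← zpow_add]

omit hbas in
lemma Un_mul (a b : ℤ) : Un k U a * Un k U b = Un k U (a + b) := by
  apply Subtype.ext
  simp [Un, ← Units.val_mul, ← zpow_add]

lemma Pl_one : Pl U bas 1 = 1 := by
  rw [← bas_one U V bas hbas, Pl_bas]
  apply Subtype.ext; simp [Un]

lemma Sl_one : Sl q bas 1 = 1 := by
  rw [← bas_one U V bas hbas, Sl_bas]
  simp only [mul_zero, qk_zero, one_smul, neg_zero]

/-- `π` is left `L`-linear -/
lemma piL_mul {x : A} (hx : x ∈ LB k U) :
    ∀ a : A, Pl U bas (x * a) = (⟨x, hx⟩ : LB k U) * Pl U bas a := by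
  induction hx using Algebra.adjoin_induction with
  | mem y hy =>
      rcases hy with h | h
      · subst h
        refine basis_ind bas (by simp) ?_ ?_ ?_
        · intro n m
          rw [u_bas U V bas hbas, Pl_bas, Pl_bas]
          rw [← Un_mul U 1 n]
          congr 1
          apply Subtype.ext; simp [Un]
        · intro c a ha
          rw [mul_smul_comm, map_smul, ha, map_smul, mul_smul_comm]
        · intro a b ha hb
          rw [mul_add, map_add, ha, hb, map_add, mul_add]
      · subst h
        refine basis_ind bas (by simp) ?_ ?_ ?_
        · intro n m
          rw [uinv_bas U V bas hbas, Pl_bas, Pl_bas]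
          rw [← Un_mul U (-1) n]
          congr 1
          apply Subtype.ext; simp [Un]
        · intro c a ha
          rw [mul_smul_comm, map_smul, ha, map_smul, mul_smul_comm]
        · intro a b ha hb
          rw [mul_add, map_add, ha, hb, map_add, mul_add]
  | algebraMap r =>
      intro a
      rw [← Algebra.smul_def, map_smul]
      have : (⟨algebraMap k A r, Subalgebra.algebraMap_mem _ r⟩ : LB k U)
          = algebraMap k (LB k U) r := by
        apply Subtype.ext; simp
      rw [this, ← Algebra.smul_def]
  | add x y hx' hy' ihx ihy =>
      intro a
      rw [add_mul, map_add, ihx a, ihy a]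
      have : (⟨x + y, add_mem hx' hy'⟩ : LB k U) = ⟨x, hx'⟩ + ⟨y, hy'⟩ := rfl
      rw [this, add_mul]
  | mul x y hx' hy' ihx ihy =>
      intro a
      rw [mul_assoc, ihx, ihy]
      have : (⟨x * y, mul_mem hx' hy'⟩ : LB k U) = ⟨x, hx'⟩ * ⟨y, hy'⟩ := rfl
      rw [this, mul_assoc]

omit hbas in
lemma L_mul_comm (x y : LB k U) : x * y = y * x := by
  apply Subtype.ext
  have := commute_L (k := k) U x.1 x.2 y.1 y.2
  simpa [Commute, SemiconjBy] using this

include hq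

lemma Sl_mul (a b : A) : Sl q bas (a * b) = Sl q bas b * Sl q bas a := by
  refine basis_ind bas (p := fun a => ∀ b, Sl q bas (a * b) = Sl q bas b * Sl q bas a)
    (by simp) ?_ ?_ ?_ a b
  · intro n m
    refine basis_ind bas (by simp) ?_ ?_ ?_
    · intro r s
      rw [basmul q U V bas hq hbas, map_smul, Sl_bas, Sl_bas, Sl_bas, smul_mul_assoc,
        mul_smul_comm, basmul q U V bas hq hbas]
      have h1 : r + n = n + r := add_comm r n
      have h2 : -s + -m = -(m + s) := by ring
      rw [h1, h2, smul_smul, smul_smul, smul_smul, ← qk_add, ← qk_add, ← qk_add]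
      congr 1
      ring
    · intro c b hb
      rw [mul_smul_comm, map_smul, hb, map_smul, smul_mul_assoc]
    · intro b₁ b₂ h₁ h₂
      rw [mul_add, map_add, h₁, h₂, map_add, add_mul]
  · intro c a ha b
    rw [smul_mul_assoc, map_smul, ha, map_smul, mul_smul_comm]
  · intro a₁ a₂ h₁ h₂ b
    rw [add_mul, map_add, h₁, h₂, map_add, mul_add]

lemma Sl_fix {x : A} (hx : x ∈ LB k U) : Sl q bas x = x := by
  induction hx using Algebra.adjoin_induction with
  | mem y hy =>
      rcases hy with h | h
      · subst h
        have hu : (U : A) = bas (1, 0) := by rw [bas_u U V bas hbas]; simp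
        rw [hu, Sl_bas]
        simp [qk_zero]
      · subst h
        have hu : ((U⁻¹ : Aˣ) : A) = bas (-1, 0) := by rw [bas_u U V bas hbas]; simp
        rw [hu, Sl_bas]
        simp [qk_zero]
  | algebraMap r =>
      rw [Algebra.algebraMap_eq_smul_one, map_smul, Sl_one q U V bas hbas]
  | add x y _ _ ihx ihy => rw [map_add, ihx, ihy]
  | mul x y hx' hy' ihx ihy =>
      rw [Sl_mul q U V bas hq hbas, ihx, ihy]
      exact commute_L (k := k) U y hy' x hx'

end mapax


section bialgax
variable (bas : Module.Basis (ℤ × ℤ) k A)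
  (hq : ((U : A) * (V : A)) = (q : k) • ((V : A) * (U : A)))
  (hbas : ∀ p : ℤ × ℤ, bas p = ((U ^ p.1 * V ^ p.2 : Aˣ) : A))

include hq hbas

omit hq hbas in
/-- coassociativity holds exactly -/
lemma coassoc_zero :
    ∀ a : A, (LinearMap.lTensor A ((Dl bas).toAddMonoidHom.toIntLinearMap))
        ((Dl bas) a)
      - @id (A ⊗[ℤ] (A ⊗[ℤ] A)) ((TensorProduct.assoc ℤ A A A)
        ((LinearMap.rTensor A ((Dl bas).toAddMonoidHom.toIntLinearMap)) ((Dl bas) a))) = 0 := by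
  have hf : ∀ (c : k) (x : A), ((Dl bas).toAddMonoidHom.toIntLinearMap) (c • x)
      = c • ((Dl bas).toAddMonoidHom.toIntLinearMap) x := by
    intro c x
    simp only [AddMonoidHom.coe_toIntLinearMap, LinearMap.toAddMonoidHom_coe, map_smul]
  refine basis_ind bas (by simp only [map_zero, id]; erw [map_zero, sub_zero]) ?_ ?_ ?_
  · intro n m
    simp only [Dl_bas, LinearMap.lTensor_tmul, LinearMap.rTensor_tmul,
      AddMonoidHom.coe_toIntLinearMap, LinearMap.toAddMonoidHom_coe, Dl_bas,
      TensorProduct.assoc_tmul, sub_self, id]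
    erw [TensorProduct.assoc_tmul]; exact sub_self _
  · intro c a ha
    simp only [id] at ha ⊢
    rw [map_smul, lTensor_ksmul, rTensor_ksmul _ hf]; erw [assoc_ksmul]
    erw [sub_eq_zero] at ha ⊢; erw [ha]; rfl
  · intro a b ha hb
    simp only [id] at ha hb ⊢
    rw [map_add, map_add, map_add]; erw [map_add]
    erw [sub_eq_zero] at ha hb ⊢; erw [ha, hb]; rfl

/-- the Takeuchi condition -/
lemma cros_ax (l : LB k U) :
    ∀ a : A, (LinearMap.rTensor A (LinearMap.mulRight ℤ ((l : A)))) ((Dl bas) a)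
      - (LinearMap.lTensor A (LinearMap.mulRight ℤ ((l : A)))) ((Dl bas) a) ∈ Rl k U := by
  refine basis_ind bas (by simpa using zero_mem (Rl k U)) ?_ ?_ ?_
  · intro n m
    simp only [Dl_bas, LinearMap.rTensor_tmul, LinearMap.lTensor_tmul, LinearMap.mulRight_apply]
    obtain ⟨cc, hcm, hswap⟩ : ∃ cc : A, cc ∈ LB k U ∧
        ((V ^ m : Aˣ) : A) * (l : A) = cc * ((V ^ m : Aˣ) : A) :=
      ⟨_, cnj_mem q U V hq m l.2, vpow_mul_L V m (l : A)⟩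
    have h2 : bas (0, m) * (l : A) = cc * bas (0, m) := by
      rw [bas_v U V bas hbas]; exact hswap
    have h1 : bas (n, m) * (l : A) = cc * bas (n, m) := by
      rw [bas_eq U V bas hbas, mul_assoc, hswap, ← mul_assoc,
        commute_L (k := k) U _ (upow_mem U n) cc hcm, mul_assoc]
    rw [h1, h2]
    exact gen_mem U ⟨cc, hcm⟩ (bas (n, m)) (bas (0, m))
  · intro c a ha
    have hfr : ∀ (cc : k) (x : A), (LinearMap.mulRight ℤ ((l : A))) (cc • x)
        = cc • (LinearMap.mulRight ℤ ((l : A))) x := by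
      intro cc x; simp [smul_mul_assoc]
    rw [map_smul, rTensor_ksmul _ hfr, lTensor_ksmul, ← smul_sub]
    exact Rl_ksmul U c ha
  · intro a b ha hb
    rw [map_add, map_add, map_add, add_sub_add_comm]
    exact add_mem ha hb

/-- comultiplicativity holds exactly -/
lemma dmul_ax : ∀ a b : A, Dl bas (a * b) = Dl bas a * Dl bas b := by
  intro a b
  refine basis_ind bas (p := fun a => ∀ b, Dl bas (a * b) = Dl bas a * Dl bas b)
    (by simp) ?_ ?_ ?_ a b
  · intro n m
    refine basis_ind bas (by simp) ?_ ?_ ?_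
    · intro r s
      rw [basmul q U V bas hq hbas, map_smul, Dl_bas, Dl_bas, Dl_bas,
        Algebra.TensorProduct.tmul_mul_tmul, basmul q U V bas hq hbas,
        basmul q U V bas hq hbas]
      simp only [mul_zero, neg_zero, qk_zero, one_smul, zero_add]
      rw [TensorProduct.smul_tmul']
    · intro c b hb
      rw [mul_smul_comm, map_smul, hb, map_smul, mul_tsmul]
    · intro b₁ b₂ h₁ h₂
      rw [mul_add, map_add, h₁, h₂, map_add, mul_add]
  · intro c a ha b
    rw [smul_mul_assoc, map_smul, ha, map_smul, tsmul_mul]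
  · intro a₁ a₂ h₁ h₂ b
    rw [add_mul, map_add, h₁, h₂, map_add, add_mul]

end bialgax


section mainax
variable (bas : Module.Basis (ℤ × ℤ) k A)
  (hq : ((U : A) * (V : A)) = (q : k) • ((V : A) * (U : A)))
  (hbas : ∀ p : ℤ × ℤ, bas p = ((U ^ p.1 * V ^ p.2 : Aˣ) : A))

variable (k) in
noncomputable def sM : LB k U →+* A := (Subalgebra.val (LB k U)).toRingHom

variable (k) in
noncomputable def tM : LB k U →+ A := (sM k U).toAddMonoidHom

noncomputable def piM : A →+ LB k U := (Pl U bas).toAddMonoidHom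

noncomputable def DM : A →+ A ⊗[ℤ] A := (Dl bas).toAddMonoidHom

@[simp] lemma sM_apply (l : LB k U) : sM k U l = (l : A) := rfl
@[simp] lemma tM_apply (l : LB k U) : tM k U l = (l : A) := rfl
@[simp] lemma piM_apply (a : A) : piM U bas a = Pl U bas a := rfl
@[simp] lemma DM_apply (a : A) : DM bas a = Dl bas a := rfl

noncomputable def Se : A ≃+ A where
  toFun := Sl q bas
  invFun := Sl q bas
  left_inv := Sl_Sl q bas
  right_inv := Sl_Sl q bas
  map_add' := fun x y => map_add _ x y

@[simp] lemma Se_apply (a : A) : Se q bas a = Sl q bas a := rfl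
@[simp] lemma Se_symm_apply (a : A) : (Se q bas).symm a = Sl q bas a := rfl

include hbas

lemma counits_ax : ∀ a : A,
    LinearMap.mul' ℤ A ((LinearMap.rTensor A
      ((sM k U).toAddMonoidHom.comp (piM U bas)).toIntLinearMap) ((DM bas) a)) = a := by
  have hf : ∀ (c : k) (x : A),
      (((sM k U).toAddMonoidHom.comp (piM U bas)).toIntLinearMap) (c • x)
        = c • (((sM k U).toAddMonoidHom.comp (piM U bas)).toIntLinearMap) x := by
    intro c x
    simp [map_smul]
  refine basis_ind bas (by simp) ?_ ?_ ?_
  · intro n m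
    simp only [DM_apply, Dl_bas, LinearMap.rTensor_tmul, AddMonoidHom.coe_toIntLinearMap,
      AddMonoidHom.coe_comp, Function.comp_apply, piM_apply, Pl_bas, sM_apply,
      LinearMap.mul'_apply]
    rw [show (sM k U).toAddMonoidHom (Un k U n) = ((U ^ n : Aˣ) : A) from rfl,
      bas_v U V bas hbas, ← bas_eq U V bas hbas]
  · intro c a ha
    rw [DM_apply, map_smul, rTensor_ksmul _ hf, mul'_ksmul]
    rw [DM_apply] at ha
    rw [ha]
  · intro a b ha hb
    rw [DM_apply, map_add, map_add, map_add]
    rw [DM_apply] at ha hb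
    rw [ha, hb]

lemma counitt_ax : ∀ a : A,
    LinearMap.mul' ℤ A ((TensorProduct.comm ℤ A A)
      ((LinearMap.lTensor A ((tM k U).comp (piM U bas)).toIntLinearMap) ((DM bas) a))) = a := by
  refine basis_ind bas (by simp) ?_ ?_ ?_
  · intro n m
    simp only [DM_apply, Dl_bas, LinearMap.lTensor_tmul, AddMonoidHom.coe_toIntLinearMap,
      AddMonoidHom.coe_comp, Function.comp_apply, piM_apply, Pl_bas, tM_apply,
      TensorProduct.comm_tmul, LinearMap.mul'_apply]
    rw [show ((Un k U 0 : LB k U) : A) = ((U ^ (0 : ℤ) : Aˣ) : A) from rfl]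
    simp
  · intro c a ha
    rw [DM_apply, map_smul, lTensor_ksmul, mulcomm'_ksmul]
    rw [DM_apply] at ha
    rw [ha]
  · intro a b ha hb
    rw [DM_apply, map_add, map_add, map_add, map_add]
    rw [DM_apply] at ha hb
    rw [ha, hb]

include hq

lemma pis_ax : ∀ a b : A, Pl U bas (a * ((Pl U bas b : LB k U) : A)) = Pl U bas (a * b) := by
  intro a b
  refine basis_ind bas
    (p := fun a => ∀ b, Pl U bas (a * ((Pl U bas b : LB k U) : A)) = Pl U bas (a * b))
    (by simp) ?_ ?_ ?_ a b
  · intro n m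
    refine basis_ind bas (by simp) ?_ ?_ ?_
    · intro r s
      rw [Pl_bas, show ((Un k U r : LB k U) : A) = ((U ^ r : Aˣ) : A) from rfl,
        ← bas_u U V bas hbas, basmul q U V bas hq hbas, basmul q U V bas hq hbas,
        map_smul, map_smul, Pl_bas, Pl_bas]
    · intro c b hb
      rw [map_smul]
      rw [show ((c • Pl U bas b : LB k U) : A) = c • ((Pl U bas b : LB k U) : A) from rfl]
      rw [mul_smul_comm, map_smul, hb, mul_smul_comm, map_smul]
    · intro b₁ b₂ h₁ h₂
      rw [map_add]
      rw [show (((Pl U bas b₁ + Pl U bas b₂ : LB k U)) : A)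
          = ((Pl U bas b₁ : LB k U) : A) + ((Pl U bas b₂ : LB k U) : A) from rfl]
      rw [mul_add, map_add, h₁, h₂, mul_add, map_add]
  · intro c a ha b
    rw [smul_mul_assoc, map_smul, ha, smul_mul_assoc, map_smul]
  · intro a₁ a₂ h₁ h₂ b
    rw [add_mul, map_add, h₁, h₂, add_mul, map_add]

omit hq hbas in
/-- `m23` commutes with k-smul modulo the relation -/
lemma m23_smul_rel (c : k) (x : A ⊗[ℤ] (A ⊗[ℤ] A)) :
    HopfAlgd.m23 A (c • x) - c • HopfAlgd.m23 A x ∈ Rl k U := by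
  induction x using TensorProduct.induction_on with
  | zero => simpa using zero_mem (Rl k U)
  | tmul a w =>
      rw [TensorProduct.smul_tmul']
      induction w using TensorProduct.induction_on with
      | zero => simpa using zero_mem (Rl k U)
      | tmul y z =>
          rw [m23_tmul, m23_tmul, mul_smul_comm, TensorProduct.smul_tmul']
          have h := gen_mem U (algebraMap k (LB k U) c) y (z * a)
          have hcoe : ((algebraMap k (LB k U) c : LB k U) : A) = algebraMap k A c := rfl
          rw [hcoe, ← Algebra.smul_def, ← Algebra.smul_def] at h
          have h2 := neg_mem h
          rw [neg_sub] at h2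
          exact h2
      | add w₁ w₂ h₁ h₂ =>
          rw [TensorProduct.tmul_add, TensorProduct.tmul_add, map_add, map_add, smul_add,
            add_sub_add_comm]
          exact add_mem h₁ h₂
  | add x y hx hy =>
      rw [smul_add, map_add, map_add, smul_add, add_sub_add_comm]
      exact add_mem hx hy

end mainax


section antipode
variable (bas : Module.Basis (ℤ × ℤ) k A)
  (hq : ((U : A) * (V : A)) = (q : k) • ((V : A) * (U : A)))
  (hbas : ∀ p : ℤ × ℤ, bas p = ((U ^ p.1 * V ^ p.2 : Aˣ) : A))

include hq hbas

lemma axs_ax : ∀ a : A,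
    HopfAlgd.axsExpr (DM bas) (Se q bas).toAddMonoidHom ((DM bas) a)
      - (1 : A) ⊗ₜ[ℤ] (Se q bas a) ∈ Rl k U := by
  have hg : ∀ (c : k) (x : A),
      ((DM bas).toIntLinearMap ∘ₗ (Se q bas).toAddMonoidHom.toIntLinearMap) (c • x)
        = c • ((DM bas).toIntLinearMap ∘ₗ (Se q bas).toAddMonoidHom.toIntLinearMap) x := by
    intro c x
    simp only [LinearMap.comp_apply, AddMonoidHom.coe_toIntLinearMap,
      AddEquiv.coe_toAddMonoidHom, Se_apply, DM_apply, map_smul]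
  refine basis_ind bas (by simpa using zero_mem (Rl k U)) ?_ ?_ ?_
  · intro n m
    rw [show (DM bas) (bas (n, m)) = bas (n, m) ⊗ₜ[ℤ] bas (0, m) from by simp]
    rw [HopfAlgd.axsExpr]; erw [LinearMap.comp_apply, LinearMap.rTensor_tmul]
    rw [show ((DM bas).toIntLinearMap ∘ₗ (Se q bas).toAddMonoidHom.toIntLinearMap) (bas (n, m))
        = qk q (n * m) • (bas (n, -m) ⊗ₜ[ℤ] bas (0, -m)) from by
      simp only [LinearMap.comp_apply, AddMonoidHom.coe_toIntLinearMap,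
        AddEquiv.coe_toAddMonoidHom, Se_apply, Sl_bas, DM_apply, map_smul, Dl_bas]]
    rw [← TensorProduct.smul_tmul', m13'_ksmul, m13'_tmul, basmul q U V bas hq hbas]
    simp only [mul_zero, neg_zero, qk_zero, one_smul, add_zero, neg_add_cancel, Se_apply,
      Sl_bas]
    have h := gen_mem U (qk q (n * m) • Un k U n) 1 (bas (0, -m))
    rw [show ((qk q (n * m) • Un k U n : LB k U) : A)
          = qk q (n * m) • ((U ^ n : Aˣ) : A) from rfl, mul_one, smul_mul_assoc,
      show ((U ^ n : Aˣ) : A) * bas (0, -m) = bas (n, -m) from by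
        rw [bas_v U V bas hbas, ← bas_eq U V bas hbas],
      ← TensorProduct.smul_tmul', ← bas_u U V bas hbas] at h
    exact h
  · intro c a ha
    rw [show (DM bas) (c • a) = c • (DM bas) a from by simp]
    rw [show HopfAlgd.axsExpr (DM bas) (Se q bas).toAddMonoidHom (c • (DM bas) a)
        = c • HopfAlgd.axsExpr (DM bas) (Se q bas).toAddMonoidHom ((DM bas) a) from by
      rw [HopfAlgd.axsExpr]
      exact (congrArg (HopfAlgd.m13' A) (rTensor_ksmul _ hg c ((DM bas) a))).trans
        (m13'_ksmul c _)]
    rw [show Se q bas (c • a) = c • Se q bas a from by simp [map_smul]]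
    have key : c • HopfAlgd.axsExpr (DM bas) (Se q bas).toAddMonoidHom ((DM bas) a)
        - (1 : A) ⊗ₜ[ℤ] (c • Se q bas a)
        = c • (HopfAlgd.axsExpr (DM bas) (Se q bas).toAddMonoidHom ((DM bas) a)
            - (1 : A) ⊗ₜ[ℤ] Se q bas a)
          + ((c • (1 : A)) ⊗ₜ[ℤ] Se q bas a - (1 : A) ⊗ₜ[ℤ] (c • Se q bas a)) := by
      rw [smul_sub, TensorProduct.smul_tmul']
      abel
    rw [key]
    refine add_mem (Rl_ksmul U c ha) ?_
    have h := gen_mem U (algebraMap k (LB k U) c) 1 (Se q bas a)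
    rw [show ((algebraMap k (LB k U) c : LB k U) : A) = algebraMap k A c from rfl, mul_one,
      ← Algebra.smul_def, Algebra.algebraMap_eq_smul_one] at h
    exact h
  · intro a b ha hb
    rw [show (DM bas) (a + b) = (DM bas) a + (DM bas) b from map_add _ a b, map_add,
      show Se q bas (a + b) = Se q bas a + Se q bas b from map_add _ a b,
      TensorProduct.tmul_add, add_sub_add_comm]
    exact add_mem ha hb

lemma axsi_ax : ∀ a : A,
    HopfAlgd.axsiExpr (DM bas) (Se q bas).symm.toAddMonoidHom ((DM bas) a)
      - ((Se q bas).symm a) ⊗ₜ[ℤ] (1 : A) ∈ Rl k U := by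
  have hg : ∀ (c : k) (x : A),
      ((DM bas).toIntLinearMap ∘ₗ (Se q bas).symm.toAddMonoidHom.toIntLinearMap) (c • x)
        = c • ((DM bas).toIntLinearMap ∘ₗ (Se q bas).symm.toAddMonoidHom.toIntLinearMap) x := by
    intro c x
    simp only [LinearMap.comp_apply, AddMonoidHom.coe_toIntLinearMap,
      AddEquiv.coe_toAddMonoidHom, Se_symm_apply, DM_apply, map_smul]
  refine basis_ind bas (by simpa using zero_mem (Rl k U)) ?_ ?_ ?_
  · intro n m
    rw [show (DM bas) (bas (n, m)) = bas (n, m) ⊗ₜ[ℤ] bas (0, m) from by simp]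
    rw [HopfAlgd.axsiExpr]; erw [LinearMap.comp_apply, LinearMap.lTensor_tmul]
    rw [show ((DM bas).toIntLinearMap ∘ₗ (Se q bas).symm.toAddMonoidHom.toIntLinearMap)
          (bas (0, m)) = bas (0, -m) ⊗ₜ[ℤ] bas (0, -m) from by
      simp only [LinearMap.comp_apply, AddMonoidHom.coe_toIntLinearMap,
        AddEquiv.coe_toAddMonoidHom, Se_symm_apply, Sl_bas, DM_apply, map_smul, Dl_bas,
        zero_mul, qk_zero, one_smul]]
    rw [m23_tmul, basmul q U V bas hq hbas]
    simp only [Se_symm_apply, Sl_bas, neg_mul, neg_neg, zero_add, neg_add_cancel]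
    have hmn : m * n = n * m := mul_comm m n
    rw [hmn]
    have h := gen_mem U (qk q (n * m) • Un k U n) (bas (0, -m)) 1
    rw [show ((qk q (n * m) • Un k U n : LB k U) : A)
          = qk q (n * m) • ((U ^ n : Aˣ) : A) from rfl, mul_one, smul_mul_assoc,
      show ((U ^ n : Aˣ) : A) * bas (0, -m) = bas (n, -m) from by
        rw [bas_v U V bas hbas, ← bas_eq U V bas hbas],
      ← TensorProduct.smul_tmul', ← bas_u U V bas hbas] at h
    have h2 := neg_mem h
    rw [neg_sub] at h2
    exact h2
  · intro c a ha
    rw [show (DM bas) (c • a) = c • (DM bas) a from by simp]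
    rw [show (Se q bas).symm (c • a) = c • (Se q bas).symm a from by simp [map_smul]]
    rw [HopfAlgd.axsiExpr]; erw [LinearMap.comp_apply, lTensor_ksmul]
    have key : HopfAlgd.m23 A (c • (LinearMap.lTensor A
          ((DM bas).toIntLinearMap ∘ₗ (Se q bas).symm.toAddMonoidHom.toIntLinearMap))
          ((DM bas) a))
        - (c • (Se q bas).symm a) ⊗ₜ[ℤ] (1 : A)
        = (HopfAlgd.m23 A (c • (LinearMap.lTensor A
            ((DM bas).toIntLinearMap ∘ₗ (Se q bas).symm.toAddMonoidHom.toIntLinearMap))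
            ((DM bas) a))
          - c • HopfAlgd.m23 A ((LinearMap.lTensor A
            ((DM bas).toIntLinearMap ∘ₗ (Se q bas).symm.toAddMonoidHom.toIntLinearMap))
            ((DM bas) a)))
          + c • (HopfAlgd.m23 A ((LinearMap.lTensor A
            ((DM bas).toIntLinearMap ∘ₗ (Se q bas).symm.toAddMonoidHom.toIntLinearMap))
            ((DM bas) a))
            - ((Se q bas).symm a) ⊗ₜ[ℤ] (1 : A)) := by
      rw [smul_sub, TensorProduct.smul_tmul']
      abel
    rw [key]
    exact add_mem (m23_smul_rel U c _) (Rl_ksmul U c ha)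
  · intro a b ha hb
    rw [show (DM bas) (a + b) = (DM bas) a + (DM bas) b from map_add _ a b, map_add,
      show (Se q bas).symm (a + b) = (Se q bas).symm a + (Se q bas).symm b from map_add _ a b,
      TensorProduct.add_tmul, add_sub_add_comm]
    exact add_mem ha hb

end antipode


section assemble
variable (bas : Module.Basis (ℤ × ℤ) k A)
  (hq : ((U : A) * (V : A)) = (q : k) • ((V : A) * (U : A)))
  (hbas : ∀ p : ℤ × ℤ, bas p = ((U ^ p.1 * V ^ p.2 : Aˣ) : A))

include hbas in
lemma Dl_one : Dl bas (1 : A) = (1 : A) ⊗ₜ[ℤ] (1 : A) := by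
  rw [← bas_one U V bas hbas, Dl_bas, bas_one U V bas hbas]

noncomputable def theB : HopfAlgd.LeftBialgebroid A (LB k U) where
  s := sM k U
  t := tM k U
  t_one := rfl
  t_mul := by
    intro l l'
    show ((l * l' : LB k U) : A) = (l' : A) * (l : A)
    rw [MulMemClass.coe_mul]
    exact commute_L (k := k) U _ l.2 _ l'.2
  st_comm := by
    intro l l'
    exact commute_L (k := k) U _ l.2 _ l'.2
  Δ := DM bas
  π := piM U bas
  coassoc := by
    intro a
    have h : (LinearMap.lTensor A ((DM bas).toIntLinearMap)) ((DM bas) a)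
        - @id (A ⊗[ℤ] (A ⊗[ℤ] A)) ((TensorProduct.assoc ℤ A A A)
          ((LinearMap.rTensor A ((DM bas).toIntLinearMap)) ((DM bas) a))) = 0 :=
      coassoc_zero bas a
    rw [h]
    exact zero_mem _
  cros := fun a l => cros_ax q U V bas hq hbas l a
  Δ_one := by
    rw [show (DM bas) 1 = (1 : A) ⊗ₜ[ℤ] (1 : A) from Dl_one U V bas hbas, sub_self]
    exact zero_mem _
  Δ_mul := by
    intro a b
    rw [show (DM bas) (a * b) = (DM bas) a * (DM bas) b from dmul_ax q U V bas hq hbas a b,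
      sub_self]
    exact zero_mem _
  counit_s := counits_ax U V bas hbas
  counit_t := counitt_ax U V bas hbas
  π_one := Pl_one U V bas hbas
  π_s := fun a b => pis_ax q U V bas hq hbas a b
  π_t := fun a b => pis_ax q U V bas hq hbas a b
  π_bimod := by
    intro l l' a
    have h1 := piL_mul U V bas hbas (x := (l' : A)) l'.2 a
    have h2 := piL_mul U V bas hbas (x := (l : A)) l.2 ((l' : A) * a)
    show Pl U bas ((l : A) * ((l' : A) * a)) = l * Pl U bas a * l'
    rw [h2, h1]
    show l * ((⟨(l' : A), l'.2⟩ : LB k U) * Pl U bas a) = l * Pl U bas a * l'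
    rw [L_mul_comm U ⟨(l' : A), l'.2⟩ (Pl U bas a), ← mul_assoc]
  
lemma theB_isHopf :
    HopfAlgd.IsHopfAlgebroid (theB q U V bas hq hbas) (Se q bas) where
  anti_mul := Sl_mul q U V bas hq hbas
  one_map := Sl_one q U V bas hbas
  S_t := fun l => Sl_fix q U V bas hq hbas l.2
  axs := axs_ax q U V bas hq hbas
  axsi := axsi_ax q U V bas hq hbas

end assemble
end S9

open HopfAlgd in
/-- The algebraic quantum torus `T_q` (the `k`-algebra with invertible
generators `U, V` satisfying `UV = qVU` and basis `{UⁿVᵐ}`) is a Hopf algebroid over the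
base `L = k[U, U⁻¹]`, with `s_L = t_L` the inclusion, `γ_L(UⁿVᵐ) = UⁿVᵐ ⊗_L Vᵐ`,
`π_L(UⁿVᵐ) = Uⁿ` and antipode `S(UⁿVᵐ) = V⁻ᵐUⁿ`. -/
theorem statement9 (k : Type*) [Field k] (q : kˣ) (A : Type*) [Ring A] [Algebra k A]
    (U V : Aˣ) (hq : ((U : A) * (V : A)) = (q : k) • ((V : A) * (U : A)))
    (bas : Module.Basis (ℤ × ℤ) k A)
    (hbas : ∀ p : ℤ × ℤ, bas p = ((U ^ p.1 * V ^ p.2 : Aˣ) : A)) :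
    ∃ (B : HopfAlgd.LeftBialgebroid A
            (Algebra.adjoin k ({(U : A), ((U⁻¹ : Aˣ) : A)} : Set A)))
      (S : A ≃+ A),
      HopfAlgd.IsHopfAlgebroid B S ∧
      (∀ l, B.s l = (l : A)) ∧
      (∀ l, B.t l = (l : A)) ∧
      (∀ n m : ℤ, B.Δ ((U ^ n * V ^ m : Aˣ) : A)
          - ((U ^ n * V ^ m : Aˣ) : A) ⊗ₜ[ℤ] ((V ^ m : Aˣ) : A) ∈ B.rel) ∧
      (∀ n m : ℤ, (B.π ((U ^ n * V ^ m : Aˣ) : A) : A) = ((U ^ n : Aˣ) : A)) ∧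
      (∀ n m : ℤ, S ((U ^ n * V ^ m : Aˣ) : A) = ((V ^ (-m) * U ^ n : Aˣ) : A)) := by
  refine ⟨S9.theB q U V bas hq hbas, S9.Se q bas, S9.theB_isHopf q U V bas hq hbas,
    fun l => rfl, fun l => rfl, ?_, ?_, ?_⟩
  · intro n m
    have e1 : ((U ^ n * V ^ m : Aˣ) : A) = bas (n, m) := (hbas (n, m)).symm
    have e2 : ((V ^ m : Aˣ) : A) = bas (0, m) := (S9.bas_v U V bas hbas m).symm
    rw [e1, e2]
    rw [show (S9.theB q U V bas hq hbas).Δ (bas (n, m)) = bas (n, m) ⊗ₜ[ℤ] bas (0, m) from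
      by simp [S9.theB], sub_self]
    exact zero_mem _
  · intro n m
    have e1 : ((U ^ n * V ^ m : Aˣ) : A) = bas (n, m) := (hbas (n, m)).symm
    rw [e1]
    show ((S9.Pl U bas (bas (n, m)) : S9.LB k U) : A) = ((U ^ n : Aˣ) : A)
    rw [S9.Pl_bas]
    rfl
  · intro n m
    have e1 : ((U ^ n * V ^ m : Aˣ) : A) = bas (n, m) := (hbas (n, m)).symm
    rw [e1]
    show S9.Sl q bas (bas (n, m)) = ((V ^ (-m) * U ^ n : Aˣ) : A)
    rw [S9.Sl_bas, Units.val_mul, S9.vpow_upow q U V hq n (-m),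
      show -(n * -m) = n * m from by ring, ← S9.bas_eq U V bas hbas]
end
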